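/- Let F be a complete geodesic metric space that is tree-graded with respect to a collection 𝒫 of pieces, and let g be an isometry of F permuting the pieces such that the cyclic group ⟨g⟩ has bounded orbits in F. If x ∈ F is a point with g(x) ≠ x, then: if the pair x, g(x) has a middle cut-point m, then g(m) = m; and if the pair x, g(x) has a middle cut-piece Q, then g(Q) = Q (set-wise). -/

import Mathlib

/-- A geodesic from `x` to `y`, parametrized by arc length on the interval `[0, dist x y]`. -/
def IsGeodesicFrom {X : Type*} [MetricSpace X] (γ : ℝ → X) (x y : X) : Prop :=
  γ 0 = x ∧ γ (dist x y) = y ∧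
    ∀ s ∈ Set.Icc (0 : ℝ) (dist x y), ∀ t ∈ Set.Icc (0 : ℝ) (dist x y),
      dist (γ s) (γ t) = |s - t|

/-- A metric space is geodesic if every two points are joined by a geodesic. -/
def IsGeodesicSpace (X : Type*) [MetricSpace X] : Prop :=
  ∀ x y : X, ∃ γ : ℝ → X, IsGeodesicFrom γ x y

/-- A subset is geodesic if every two of its points are joined by a geodesic contained in it. -/
def IsGeodesicSubset {X : Type*} [MetricSpace X] (A : Set X) : Prop :=
  ∀ x ∈ A, ∀ y ∈ A, ∃ γ : ℝ → X, IsGeodesicFrom γ x y ∧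
    γ '' Set.Icc (0 : ℝ) (dist x y) ⊆ A

/-- A simple non-trivial geodesic triangle with pairwise distinct vertices `x, y, z` and
sides `γ₁, γ₂, γ₃`, any two sides meeting exactly in their common vertex. -/
def IsSimpleGeodesicTriangle {X : Type*} [MetricSpace X]
    (γ₁ γ₂ γ₃ : ℝ → X) (x y z : X) : Prop :=
  x ≠ y ∧ y ≠ z ∧ z ≠ x ∧
  IsGeodesicFrom γ₁ x y ∧ IsGeodesicFrom γ₂ y z ∧ IsGeodesicFrom γ₃ z x ∧
  (γ₁ '' Set.Icc (0 : ℝ) (dist x y)) ∩ (γ₂ '' Set.Icc (0 : ℝ) (dist y z)) = {y} ∧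
  (γ₂ '' Set.Icc (0 : ℝ) (dist y z)) ∩ (γ₃ '' Set.Icc (0 : ℝ) (dist z x)) = {z} ∧
  (γ₃ '' Set.Icc (0 : ℝ) (dist z x)) ∩ (γ₁ '' Set.Icc (0 : ℝ) (dist x y)) = {x}

/-- `𝒞` is a tree-grading of the complete geodesic metric space `X`:
a collection of closed geodesic proper subsets (pieces) covering `X` such that
(T₁) two distinct pieces meet in at most one point, and
(T₂) every simple non-trivial geodesic triangle is contained in one piece. -/
structure IsTreeGraded (X : Type*) [MetricSpace X] (𝒞 : Set (Set X)) : Prop where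
  closed : ∀ P ∈ 𝒞, IsClosed P
  geodesic : ∀ P ∈ 𝒞, IsGeodesicSubset P
  proper : ∀ P ∈ 𝒞, P ≠ Set.univ
  covers : ⋃₀ 𝒞 = Set.univ
  t1 : ∀ P ∈ 𝒞, ∀ Q ∈ 𝒞, P ≠ Q → (P ∩ Q).Subsingleton
  t2 : ∀ (γ₁ γ₂ γ₃ : ℝ → X) (x y z : X), IsSimpleGeodesicTriangle γ₁ γ₂ γ₃ x y z →
    ∃ P ∈ 𝒞, (γ₁ '' Set.Icc (0 : ℝ) (dist x y)) ∪ (γ₂ '' Set.Icc (0 : ℝ) (dist y z)) ∪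
      (γ₃ '' Set.Icc (0 : ℝ) (dist z x)) ⊆ P

/-- The set of cut-points of the arc `γ([0,d])`: the complement, in the arc, of the union of
the interiors of all subarcs arising as intersections of the arc with a single piece. -/
def cutpSet {X : Type*} [MetricSpace X] (𝒞 : Set (Set X)) (γ : ℝ → X) (d : ℝ) : Set X :=
  {p | ∃ t ∈ Set.Icc (0 : ℝ) d, γ t = p ∧
    ¬ ∃ P ∈ 𝒞, ∃ s u : ℝ, 0 ≤ s ∧ s < t ∧ t < u ∧ u ≤ d ∧
      γ '' Set.Icc s u = (γ '' Set.Icc (0 : ℝ) d) ∩ P}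

/-- `m` is the middle cut-point of the pair `x, y`: if `x = y` it is `x` itself; if `x ≠ y`
it is a point of `Cutp{x,y}` equidistant from `x` and `y` (at distance `dist x y / 2`). -/
def IsMiddleCutPoint {X : Type*} [MetricSpace X] (𝒞 : Set (Set X)) (x y m : X) : Prop :=
  (x = y ∧ m = x) ∨
  (x ≠ y ∧ ∃ γ : ℝ → X, IsGeodesicFrom γ x y ∧
    m ∈ cutpSet 𝒞 γ (dist x y) ∧ dist x m = dist x y / 2 ∧ dist y m = dist x y / 2)

/-- `Q` is the middle cut-piece of the pair `x, y`: when `x ≠ y` and no point of `Cutp{x,y}` is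
equidistant from `x` and `y`, it is the (unique) piece containing the point `a` of `Cutp{x,y}`
farthest from `x` with `dist x a ≤ dist x y / 2` and the point `b` of `Cutp{x,y}` farthest
from `y` with `dist y b ≤ dist x y / 2`. -/
def IsMiddleCutPiece {X : Type*} [MetricSpace X] (𝒞 : Set (Set X)) (x y : X)
    (Q : Set X) : Prop :=
  x ≠ y ∧ Q ∈ 𝒞 ∧
  ∃ γ : ℝ → X, IsGeodesicFrom γ x y ∧
    (∀ p ∈ cutpSet 𝒞 γ (dist x y), dist x p ≠ dist y p) ∧
    ∃ a ∈ cutpSet 𝒞 γ (dist x y), ∃ b ∈ cutpSet 𝒞 γ (dist x y),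
      a ∈ Q ∧ b ∈ Q ∧
      dist x a ≤ dist x y / 2 ∧
      (∀ p ∈ cutpSet 𝒞 γ (dist x y), dist x p ≤ dist x y / 2 → dist x p ≤ dist x a) ∧
      dist y b ≤ dist x y / 2 ∧
      (∀ p ∈ cutpSet 𝒞 γ (dist x y), dist y p ≤ dist x y / 2 → dist y p ≤ dist y b)

namespace TGaux

open Set

variable {X : Type*} [MetricSpace X]

theorem geod_start {γ : ℝ → X} {x y : X} (h : IsGeodesicFrom γ x y) : γ 0 = x := h.1

theorem geod_end {γ : ℝ → X} {x y : X} (h : IsGeodesicFrom γ x y) : γ (dist x y) = y := h.2.1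

theorem geod_dist {γ : ℝ → X} {x y : X} (h : IsGeodesicFrom γ x y) {s t : ℝ}
    (hs : s ∈ Icc (0:ℝ) (dist x y)) (ht : t ∈ Icc (0:ℝ) (dist x y)) :
    dist (γ s) (γ t) = |s - t| := h.2.2 s hs t ht

theorem geod_dist_start {γ : ℝ → X} {x y : X} (h : IsGeodesicFrom γ x y) {s : ℝ}
    (hs : s ∈ Icc (0:ℝ) (dist x y)) : dist x (γ s) = s := by
  have := geod_dist h (⟨le_refl 0, dist_nonneg⟩ : (0:ℝ) ∈ Icc (0:ℝ) (dist x y)) hs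
  rw [geod_start h] at this
  rw [this, abs_sub_comm, abs_of_nonneg (by linarith [hs.1] : (0:ℝ) ≤ s - 0)]
  ring

theorem geod_dist_end {γ : ℝ → X} {x y : X} (h : IsGeodesicFrom γ x y) {s : ℝ}
    (hs : s ∈ Icc (0:ℝ) (dist x y)) : dist (γ s) y = dist x y - s := by
  have hd : dist x y ∈ Icc (0:ℝ) (dist x y) := ⟨dist_nonneg, le_refl _⟩
  have := geod_dist h hs hd
  rw [geod_end h] at this
  rw [this, abs_of_nonpos (by linarith [hs.2])]
  ring

theorem geod_inj {γ : ℝ → X} {x y : X} (h : IsGeodesicFrom γ x y) {s t : ℝ}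
    (hs : s ∈ Icc (0:ℝ) (dist x y)) (ht : t ∈ Icc (0:ℝ) (dist x y)) (he : γ s = γ t) :
    s = t := by
  have := geod_dist h hs ht
  rw [he, dist_self] at this
  have : |s - t| = 0 := this.symm
  have := abs_eq_zero.mp this
  linarith

theorem geod_mem_param {γ : ℝ → X} {x y : X} (h : IsGeodesicFrom γ x y) {p : X}
    (hp : p ∈ γ '' Icc (0:ℝ) (dist x y)) : γ (dist x p) = p ∧ dist x p ∈ Icc (0:ℝ) (dist x y) := by
  obtain ⟨t, ht, rfl⟩ := hp
  have := geod_dist_start h ht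
  rw [this]
  exact ⟨rfl, ht⟩

theorem geod_continuousOn {γ : ℝ → X} {x y : X} (h : IsGeodesicFrom γ x y) :
    ContinuousOn γ (Icc (0:ℝ) (dist x y)) := by
  have : LipschitzOnWith 1 γ (Icc (0:ℝ) (dist x y)) := by
    rw [lipschitzOnWith_iff_dist_le_mul]
    intro s hs t ht
    rw [geod_dist h hs ht, Real.dist_eq]
    simp
  exact this.continuousOn

theorem geod_image_compact {γ : ℝ → X} {x y : X} (h : IsGeodesicFrom γ x y) :
    IsCompact (γ '' Icc (0:ℝ) (dist x y)) :=
  isCompact_Icc.image_of_continuousOn (geod_continuousOn h)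

theorem hit_closed {γ : ℝ → X} {x y : X} (h : IsGeodesicFrom γ x y) {K : Set X}
    (hK : IsClosed K) : IsClosed {s | s ∈ Icc (0:ℝ) (dist x y) ∧ γ s ∈ K} := by
  have : {s | s ∈ Icc (0:ℝ) (dist x y) ∧ γ s ∈ K}
      = Icc (0:ℝ) (dist x y) ∩ γ ⁻¹' K := rfl
  rw [this]
  exact (geod_continuousOn h).preimage_isClosed_of_isClosed isClosed_Icc hK

/-- forward subsegment -/
theorem sub_geod {γ : ℝ → X} {x y : X} (h : IsGeodesicFrom γ x y) {a b : ℝ}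
    (ha : a ∈ Icc (0:ℝ) (dist x y)) (hb : b ∈ Icc (0:ℝ) (dist x y)) (hab : a ≤ b) :
    dist (γ a) (γ b) = b - a ∧ IsGeodesicFrom (fun s => γ (a + s)) (γ a) (γ b) ∧
      (fun s => γ (a + s)) '' Icc (0:ℝ) (dist (γ a) (γ b)) = γ '' Icc a b := by
  have hd : dist (γ a) (γ b) = b - a := by
    rw [geod_dist h ha hb, abs_of_nonpos (by linarith)]; ring
  refine ⟨hd, ⟨by simp, ?_, ?_⟩, ?_⟩
  · rw [hd]; simp [show a + (b - a) = b by ring]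
  · intro s hs t ht
    rw [hd] at hs ht
    have hs' : a + s ∈ Icc (0:ℝ) (dist x y) := ⟨by linarith [hs.1, ha.1], by linarith [hs.2, hb.2]⟩
    have ht' : a + t ∈ Icc (0:ℝ) (dist x y) := ⟨by linarith [ht.1, ha.1], by linarith [ht.2, hb.2]⟩
    rw [geod_dist h hs' ht']
    congr 1; ring
  · rw [hd]
    ext p
    constructor
    · rintro ⟨s, hs, rfl⟩
      exact ⟨a + s, ⟨by linarith [hs.1], by linarith [hs.2]⟩, rfl⟩
    · rintro ⟨t, ht, rfl⟩
      exact ⟨t - a, ⟨by linarith [ht.1], by linarith [ht.2]⟩, by simp⟩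

/-- backward subsegment -/
theorem subrev_geod {γ : ℝ → X} {x y : X} (h : IsGeodesicFrom γ x y) {a b : ℝ}
    (ha : a ∈ Icc (0:ℝ) (dist x y)) (hb : b ∈ Icc (0:ℝ) (dist x y)) (hab : a ≤ b) :
    dist (γ b) (γ a) = b - a ∧ IsGeodesicFrom (fun s => γ (b - s)) (γ b) (γ a) ∧
      (fun s => γ (b - s)) '' Icc (0:ℝ) (dist (γ b) (γ a)) = γ '' Icc a b := by
  have hd : dist (γ b) (γ a) = b - a := by
    rw [geod_dist h hb ha, abs_of_nonneg (by linarith)]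
  refine ⟨hd, ⟨by simp, ?_, ?_⟩, ?_⟩
  · rw [hd]; simp [show b - (b - a) = a by ring]
  · intro s hs t ht
    rw [hd] at hs ht
    have hs' : b - s ∈ Icc (0:ℝ) (dist x y) := ⟨by linarith [hs.2, ha.1], by linarith [hs.1, hb.2]⟩
    have ht' : b - t ∈ Icc (0:ℝ) (dist x y) := ⟨by linarith [ht.2, ha.1], by linarith [ht.1, hb.2]⟩
    rw [geod_dist h hs' ht', abs_sub_comm]
    congr 1; ring
  · rw [hd]
    ext p
    constructor
    · rintro ⟨s, hs, rfl⟩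
      exact ⟨b - s, ⟨by linarith [hs.2], by linarith [hs.1]⟩, rfl⟩
    · rintro ⟨t, ht, rfl⟩
      exact ⟨b - t, ⟨by linarith [ht.2], by linarith [ht.1]⟩, by simp⟩

/-- image of a geodesic under an isometric equivalence -/
theorem comp_geod {γ : ℝ → X} {x y : X} (h : IsGeodesicFrom γ x y) (g : X ≃ᵢ X) :
    IsGeodesicFrom (fun s => g (γ s)) (g x) (g y) ∧
      ∀ S : Set ℝ, (fun s => g (γ s)) '' S = g '' (γ '' S) := by
  have hd : dist (g x) (g y) = dist x y := g.isometry.dist_eq x y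
  constructor
  · refine ⟨?_, ?_, ?_⟩
    · show g (γ 0) = g x
      rw [geod_start h]
    · show g (γ (dist (g x) (g y))) = g y
      rw [hd, geod_end h]
    · intro s hs t ht
      rw [hd] at hs ht
      show dist (g (γ s)) (g (γ t)) = |s - t|
      rw [g.isometry.dist_eq, geod_dist h hs ht]
  · intro S
    rw [Set.image_image]

theorem concat_mid_dist {γ₁ γ₂ : ℝ → X} {p m q : X} (h₁ : IsGeodesicFrom γ₁ p m)
    (h₂ : IsGeodesicFrom γ₂ m q) (hadd : dist p q = dist p m + dist m q)
    {s t : ℝ} (hs : s ∈ Icc (0:ℝ) (dist p m)) (ht : t ∈ Icc (0:ℝ) (dist m q)) :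
    dist (γ₁ s) (γ₂ t) = (dist p m - s) + t := by
  have hle : dist (γ₁ s) (γ₂ t) ≤ (dist p m - s) + t := by
    calc dist (γ₁ s) (γ₂ t) ≤ dist (γ₁ s) m + dist m (γ₂ t) := dist_triangle _ _ _
    _ = (dist p m - s) + t := by
        rw [show dist (γ₁ s) m = dist p m - s from geod_dist_end h₁ hs,
          show dist m (γ₂ t) = t from geod_dist_start h₂ ht]
  have hge : (dist p m - s) + t ≤ dist (γ₁ s) (γ₂ t) := by
    have h3 : dist p q ≤ dist p (γ₁ s) + dist (γ₁ s) (γ₂ t) + dist (γ₂ t) q := by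
      calc dist p q ≤ dist p (γ₁ s) + dist (γ₁ s) q := dist_triangle _ _ _
      _ ≤ dist p (γ₁ s) + (dist (γ₁ s) (γ₂ t) + dist (γ₂ t) q) := by
          linarith [dist_triangle (γ₁ s) (γ₂ t) q]
      _ = _ := by ring
    rw [show dist p (γ₁ s) = s from geod_dist_start h₁ hs,
      show dist (γ₂ t) q = dist m q - t from geod_dist_end h₂ ht, hadd] at h3
    linarith
  linarith

theorem concat_geod {γ₁ γ₂ : ℝ → X} {p m q : X} (h₁ : IsGeodesicFrom γ₁ p m)
    (h₂ : IsGeodesicFrom γ₂ m q) (hadd : dist p q = dist p m + dist m q) :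
    IsGeodesicFrom (fun s => if s ≤ dist p m then γ₁ s else γ₂ (s - dist p m)) p q := by
  have h01 : (0:ℝ) ≤ dist p m := dist_nonneg
  have h02 : (0:ℝ) ≤ dist m q := dist_nonneg
  have heval : ∀ s : ℝ, dist p m ≤ s →
      (if s ≤ dist p m then γ₁ s else γ₂ (s - dist p m)) = γ₂ (s - dist p m) := by
    intro s hs
    by_cases hc : s ≤ dist p m
    · have hsd : s = dist p m := le_antisymm hc hs
      rw [if_pos hc, hsd, show dist p m - dist p m = (0:ℝ) by ring, geod_start h₂]
      exact geod_end h₁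
    · simp [hc]
  have hkey : ∀ s ∈ Icc (0:ℝ) (dist p m + dist m q), ∀ t ∈ Icc (0:ℝ) (dist p m + dist m q),
      s ≤ t →
      dist (if s ≤ dist p m then γ₁ s else γ₂ (s - dist p m))
        (if t ≤ dist p m then γ₁ t else γ₂ (t - dist p m)) = t - s := by
    intro s hs t ht hst
    by_cases hs1 : s ≤ dist p m
    · by_cases ht1 : t ≤ dist p m
      · simp only [if_pos hs1, if_pos ht1]
        rw [geod_dist h₁ ⟨hs.1, hs1⟩ ⟨ht.1, ht1⟩, abs_of_nonpos (by linarith)]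
        ring
      · push_neg at ht1
        rw [if_pos hs1, heval t (le_of_lt ht1)]
        rw [concat_mid_dist h₁ h₂ hadd ⟨hs.1, hs1⟩ ⟨by linarith, by linarith [ht.2]⟩]
        ring
    · push_neg at hs1
      rw [heval s (le_of_lt hs1), heval t (le_of_lt (lt_of_lt_of_le hs1 hst))]
      rw [geod_dist h₂ ⟨by linarith, by linarith [hs.2]⟩ ⟨by linarith, by linarith [ht.2]⟩]
      rw [abs_of_nonpos (by linarith)]
      ring
  refine ⟨by simp [h01, geod_start h₁], ?_, ?_⟩
  · show (if dist p q ≤ dist p m then γ₁ (dist p q) else γ₂ (dist p q - dist p m)) = q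
    rw [heval (dist p q) (by rw [hadd]; linarith), hadd,
      show dist p m + dist m q - dist p m = dist m q by ring]
    exact geod_end h₂
  · intro s hs t ht
    rw [hadd] at hs ht
    rcases le_total s t with hst | hst
    · show dist (if s ≤ dist p m then γ₁ s else γ₂ (s - dist p m))
        (if t ≤ dist p m then γ₁ t else γ₂ (t - dist p m)) = |s - t|
      rw [hkey s hs t ht hst, abs_of_nonpos (by linarith)]
      ring
    · show dist (if s ≤ dist p m then γ₁ s else γ₂ (s - dist p m))
        (if t ≤ dist p m then γ₁ t else γ₂ (t - dist p m)) = |s - t|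
      rw [dist_comm, hkey t ht s hs hst, abs_of_nonneg (by linarith)]

theorem concat_image {γ₁ γ₂ : ℝ → X} {p m q : X} (h₁ : IsGeodesicFrom γ₁ p m)
    (h₂ : IsGeodesicFrom γ₂ m q) (hadd : dist p q = dist p m + dist m q) :
    (fun s => if s ≤ dist p m then γ₁ s else γ₂ (s - dist p m)) '' Icc (0:ℝ) (dist p q)
      = γ₁ '' Icc (0:ℝ) (dist p m) ∪ γ₂ '' Icc (0:ℝ) (dist m q) := by
  have h01 : (0:ℝ) ≤ dist p m := dist_nonneg
  have h02 : (0:ℝ) ≤ dist m q := dist_nonneg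
  ext z
  constructor
  · rintro ⟨s, hs, rfl⟩
    rw [hadd] at hs
    by_cases hc : s ≤ dist p m
    · left
      exact ⟨s, ⟨hs.1, hc⟩, by simp [hc]⟩
    · right
      push_neg at hc
      exact ⟨s - dist p m, ⟨by linarith, by linarith [hs.2]⟩, by simp [not_le.mpr hc]⟩
  · rintro (⟨s, hs, rfl⟩ | ⟨t, ht, rfl⟩)
    · exact ⟨s, by rw [hadd]; exact ⟨hs.1, by linarith [hs.2]⟩, by simp [hs.2]⟩
    · refine ⟨dist p m + t, by rw [hadd]; exact ⟨by linarith [ht.1], by linarith [ht.2]⟩, ?_⟩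
      show (if dist p m + t ≤ dist p m then γ₁ (dist p m + t) else γ₂ (dist p m + t - dist p m))
        = γ₂ t
      by_cases hc : dist p m + t ≤ dist p m
      · have ht0 : t = 0 := le_antisymm (by linarith) ht.1
        rw [if_pos hc, ht0, show dist p m + 0 = dist p m by ring, geod_start h₂]
        exact geod_end h₁
      · rw [if_neg hc, show dist p m + t - dist p m = t by ring]

theorem point_on_geod_add {γ : ℝ → X} {x y : X} (h : IsGeodesicFrom γ x y) {p : X}
    (hp : p ∈ γ '' Icc (0:ℝ) (dist x y)) : dist x p + dist p y = dist x y := by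
  obtain ⟨t, ht, rfl⟩ := hp
  rw [geod_dist_start h ht, geod_dist_end h ht]
  ring

theorem const_geod (a : X) : IsGeodesicFrom (fun _ => a) a a := by
  refine ⟨rfl, rfl, ?_⟩
  intro s hs t ht
  rw [dist_self] at hs ht
  have hs0 : s = 0 := le_antisymm hs.2 hs.1
  have ht0 : t = 0 := le_antisymm ht.2 ht.1
  subst hs0; subst ht0
  simp

theorem const_geod_image (a : X) :
    (fun _ : ℝ => a) '' Icc (0:ℝ) (dist a a) = {a} := by
  rw [dist_self]
  ext z
  constructor
  · rintro ⟨s, hs, rfl⟩; rfl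
  · rintro rfl; exact ⟨0, ⟨le_refl _, le_refl _⟩, rfl⟩

theorem hit_closed' {γ : ℝ → X} {x y : X} (h : IsGeodesicFrom γ x y) {K : Set X}
    (hK : IsClosed K) {a b : ℝ} (hsub : Icc a b ⊆ Icc (0:ℝ) (dist x y)) :
    IsClosed {s | s ∈ Icc a b ∧ γ s ∈ K} := by
  have : {s | s ∈ Icc a b ∧ γ s ∈ K} = Icc a b ∩ γ ⁻¹' K := rfl
  rw [this]
  exact ((geod_continuousOn h).mono hsub).preimage_isClosed_of_isClosed isClosed_Icc hK

theorem seg_compact {γ : ℝ → X} {x y : X} (h : IsGeodesicFrom γ x y) {a b : ℝ}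
    (hsub : Icc a b ⊆ Icc (0:ℝ) (dist x y)) : IsCompact (γ '' Icc a b) :=
  isCompact_Icc.image_of_continuousOn ((geod_continuousOn h).mono hsub)

theorem sub_geod' {γ : ℝ → X} {x y : X} (h : IsGeodesicFrom γ x y) {a b : ℝ}
    (ha : a ∈ Icc (0:ℝ) (dist x y)) (hb : b ∈ Icc (0:ℝ) (dist x y)) (hab : a ≤ b)
    {u v : X} (hu : γ a = u) (hv : γ b = v) :
    dist u v = b - a ∧ IsGeodesicFrom (fun s => γ (a + s)) u v ∧
      (fun s => γ (a + s)) '' Icc (0:ℝ) (dist u v) = γ '' Icc a b := by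
  subst hu; subst hv; exact sub_geod h ha hb hab

theorem subrev_geod' {γ : ℝ → X} {x y : X} (h : IsGeodesicFrom γ x y) {a b : ℝ}
    (ha : a ∈ Icc (0:ℝ) (dist x y)) (hb : b ∈ Icc (0:ℝ) (dist x y)) (hab : a ≤ b)
    {u v : X} (hu : γ b = u) (hv : γ a = v) :
    dist u v = b - a ∧ IsGeodesicFrom (fun s => γ (b - s)) u v ∧
      (fun s => γ (b - s)) '' Icc (0:ℝ) (dist u v) = γ '' Icc a b := by
  subst hu; subst hv; exact subrev_geod h ha hb hab

theorem concat_eval_ge {γ₁ γ₂ : ℝ → X} {p m q : X} (h₁ : IsGeodesicFrom γ₁ p m)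
    (h₂ : IsGeodesicFrom γ₂ m q) {s : ℝ} (hs : dist p m ≤ s) :
    (if s ≤ dist p m then γ₁ s else γ₂ (s - dist p m)) = γ₂ (s - dist p m) := by
  by_cases hc : s ≤ dist p m
  · have hsd : s = dist p m := le_antisymm hc hs
    rw [if_pos hc, hsd, show dist p m - dist p m = (0:ℝ) by ring, geod_start h₂]
    exact geod_end h₁
  · simp [hc]

end TGaux

namespace TGaux

open Set

variable {X : Type*} [MetricSpace X] {𝒞 : Set (Set X)}

/-- chains of geodesic segments all avoiding the point `m` -/
def AvoidChain (m : X) : ℕ → X → X → Prop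
  | 0 => fun a b => a = b
  | j+1 => fun a b => ∃ c, ∃ ν : ℝ → X, IsGeodesicFrom ν a c ∧
      m ∉ ν '' Set.Icc (0:ℝ) (dist a c) ∧ AvoidChain m j c b

theorem avoidChain_zero {m a b : X} : AvoidChain m 0 a b ↔ a = b := Iff.rfl

theorem avoidChain_succ {m a b : X} {j : ℕ} :
    AvoidChain m (j+1) a b ↔ ∃ c, ∃ ν : ℝ → X, IsGeodesicFrom ν a c ∧
      m ∉ ν '' Set.Icc (0:ℝ) (dist a c) ∧ AvoidChain m j c b := Iff.rfl

theorem AvoidChain.append {m a b c : X} {j₁ j₂ : ℕ}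
    (h₁ : AvoidChain m j₁ a b) (h₂ : AvoidChain m j₂ b c) :
    AvoidChain m (j₁ + j₂) a c := by
  induction j₁ generalizing a with
  | zero =>
    have h₁' : a = b := h₁
    subst h₁'
    simpa using h₂
  | succ j ih =>
    obtain ⟨e, ν, hν, hm, hrest⟩ := h₁
    rw [show j + 1 + j₂ = (j + j₂) + 1 by ring]
    exact ⟨e, ν, hν, hm, ih hrest⟩

theorem rev_geod {γ : ℝ → X} {x y : X} (h : IsGeodesicFrom γ x y) :
    IsGeodesicFrom (fun s => γ (dist x y - s)) y x ∧
      (fun s => γ (dist x y - s)) '' Icc (0:ℝ) (dist y x) = γ '' Icc (0:ℝ) (dist x y) := by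
  have h0 : (0:ℝ) ∈ Icc (0:ℝ) (dist x y) := ⟨le_refl _, dist_nonneg⟩
  have hd : dist x y ∈ Icc (0:ℝ) (dist x y) := ⟨dist_nonneg, le_refl _⟩
  obtain ⟨hdst, hgeod, him⟩ := subrev_geod h h0 hd dist_nonneg
  rw [geod_start h, geod_end h] at hgeod him hdst
  exact ⟨hgeod, him⟩

theorem AvoidChain.single {m a b : X} {ν : ℝ → X} (hν : IsGeodesicFrom ν a b)
    (hm : m ∉ ν '' Icc (0:ℝ) (dist a b)) : AvoidChain m 1 a b :=
  ⟨b, ν, hν, hm, rfl⟩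

theorem AvoidChain.symm {m a b : X} {j : ℕ} (h : AvoidChain m j a b) :
    AvoidChain m j b a := by
  induction j generalizing a with
  | zero =>
    have h' : a = b := h
    exact h'.symm
  | succ j ih =>
    obtain ⟨c, ν, hν, hm, hrest⟩ := h
    have hrev := rev_geod hν
    have hone : AvoidChain m 1 c a := by
      refine AvoidChain.single hrev.1 ?_
      rw [hrev.2]; exact hm
    exact (ih hrest).append hone

theorem AvoidChain.transport {m a b : X} {j : ℕ} (g : X ≃ᵢ X) (h : AvoidChain m j a b) :
    AvoidChain (g m) j (g a) (g b) := by
  induction j generalizing a with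
  | zero =>
    have h' : a = b := h
    show g a = g b
    rw [h']
  | succ j ih =>
    obtain ⟨c, ν, hν, hm, hrest⟩ := h
    obtain ⟨hgeod, him⟩ := comp_geod hν g
    refine ⟨g c, _, hgeod, ?_, ih hrest⟩
    rw [show dist (g a) (g c) = dist a c from g.isometry.dist_eq a c, him]
    intro hmem
    obtain ⟨z, hz, hze⟩ := hmem
    exact hm (by rwa [g.injective hze] at hz)

/-- if `m'` is not metrically between `p` and `q`, geodesics from `p` to `q` avoid it -/
theorem link_avoids {p q m' : X} (hgeo : IsGeodesicSpace X)
    (hne : dist p m' + dist m' q ≠ dist p q) :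
    ∃ ν : ℝ → X, IsGeodesicFrom ν p q ∧ m' ∉ ν '' Icc (0:ℝ) (dist p q) := by
  obtain ⟨ν, hν⟩ := hgeo p q
  refine ⟨ν, hν, fun hmem => hne ?_⟩
  exact point_on_geod_add hν hmem

theorem geod_avoids_of_not_between {p q m' : X} {ν : ℝ → X} (hν : IsGeodesicFrom ν p q)
    (hne : dist p m' + dist m' q ≠ dist p q) : m' ∉ ν '' Icc (0:ℝ) (dist p q) :=
  fun hmem => hne (point_on_geod_add hν hmem)

/-- simple triangle from three geodesics with subset intersection conditions -/
theorem piece_of_tri (htg : IsTreeGraded X 𝒞) {σ π₁ π₂ : ℝ → X} {E₁ E₂ J : X}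
    (hσ : IsGeodesicFrom σ E₁ E₂) (h1 : IsGeodesicFrom π₁ E₂ J) (h2 : IsGeodesicFrom π₂ J E₁)
    (n12 : E₁ ≠ E₂) (n2J : E₂ ≠ J) (nJ1 : J ≠ E₁)
    (i12 : σ '' Icc (0:ℝ) (dist E₁ E₂) ∩ π₁ '' Icc (0:ℝ) (dist E₂ J) ⊆ {E₂})
    (i23 : π₁ '' Icc (0:ℝ) (dist E₂ J) ∩ π₂ '' Icc (0:ℝ) (dist J E₁) ⊆ {J})
    (i31 : π₂ '' Icc (0:ℝ) (dist J E₁) ∩ σ '' Icc (0:ℝ) (dist E₁ E₂) ⊆ {E₁}) :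
    ∃ P ∈ 𝒞, σ '' Icc (0:ℝ) (dist E₁ E₂) ∪ π₁ '' Icc (0:ℝ) (dist E₂ J) ∪
      π₂ '' Icc (0:ℝ) (dist J E₁) ⊆ P := by
  have hmem : ∀ (γ : ℝ → X) (u v : X), IsGeodesicFrom γ u v →
      u ∈ γ '' Icc (0:ℝ) (dist u v) ∧ v ∈ γ '' Icc (0:ℝ) (dist u v) := by
    intro γ u v hγ
    exact ⟨⟨0, ⟨le_refl _, dist_nonneg⟩, geod_start hγ⟩,
      ⟨dist u v, ⟨dist_nonneg, le_refl _⟩, geod_end hγ⟩⟩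
  have htri : IsSimpleGeodesicTriangle σ π₁ π₂ E₁ E₂ J := by
    refine ⟨n12, n2J, nJ1, hσ, h1, h2, ?_, ?_, ?_⟩
    · exact Set.Subset.antisymm i12
        (Set.singleton_subset_iff.mpr ⟨(hmem σ E₁ E₂ hσ).2, (hmem π₁ E₂ J h1).1⟩)
    · exact Set.Subset.antisymm i23
        (Set.singleton_subset_iff.mpr ⟨(hmem π₁ E₂ J h1).2, (hmem π₂ J E₁ h2).1⟩)
    · exact Set.Subset.antisymm i31
        (Set.singleton_subset_iff.mpr ⟨(hmem π₂ J E₁ h2).2, (hmem σ E₁ E₂ hσ).1⟩)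
  obtain ⟨P, hP, hsub⟩ := htg.t2 σ π₁ π₂ E₁ E₂ J htri
  exact ⟨P, hP, hsub⟩

/-- a simple geodesic bigon is contained in one piece -/
theorem piece_of_bigon (htg : IsTreeGraded X 𝒞) {ρ π : ℝ → X} {E₁ E₂ : X}
    (hρ : IsGeodesicFrom ρ E₁ E₂) (hπ : IsGeodesicFrom π E₂ E₁) (hne : E₁ ≠ E₂)
    (hint : π '' Icc (0:ℝ) (dist E₂ E₁) ∩ ρ '' Icc (0:ℝ) (dist E₁ E₂) ⊆ {E₁, E₂}) :
    ∃ P ∈ 𝒞, ρ '' Icc (0:ℝ) (dist E₁ E₂) ∪ π '' Icc (0:ℝ) (dist E₂ E₁) ⊆ P := by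
  have hℓpos : 0 < dist E₁ E₂ := dist_pos.mpr hne
  have hhalf : dist E₁ E₂/2 ∈ Icc (0:ℝ) (dist E₁ E₂) := ⟨by linarith, by linarith⟩
  have hfull : dist E₁ E₂ ∈ Icc (0:ℝ) (dist E₁ E₂) := ⟨by linarith, le_refl _⟩
  set M := ρ (dist E₁ E₂/2) with hM
  have hdM : dist E₁ M = dist E₁ E₂/2 := geod_dist_start hρ hhalf
  have hside1 : IsGeodesicFrom ρ E₁ M := by
    refine ⟨geod_start hρ, by rw [hdM], ?_⟩
    intro s hs t ht
    rw [hdM] at hs ht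
    exact geod_dist hρ ⟨hs.1, by linarith [hs.2]⟩ ⟨ht.1, by linarith [ht.2]⟩
  have him1 : ρ '' Icc (0:ℝ) (dist E₁ M) = ρ '' Icc (0:ℝ) (dist E₁ E₂/2) := by rw [hdM]
  obtain ⟨hd2, hside2, him2⟩ := sub_geod hρ hhalf hfull (by linarith)
  rw [geod_end hρ] at hd2 hside2 him2
  -- hd2 : dist M E₂ = dist E₁ E₂ - dist E₁ E₂ / 2
  have hmemρ : ∀ {z : X}, z ∈ ρ '' Icc (0:ℝ) (dist E₁ E₂) →
      ∃ t ∈ Icc (0:ℝ) (dist E₁ E₂), ρ t = z := by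
    rintro z ⟨t, ht, rfl⟩; exact ⟨t, ht, rfl⟩
  have i12 : ρ '' Icc (0:ℝ) (dist E₁ M) ∩
      (fun s => ρ (dist E₁ E₂/2 + s)) '' Icc (0:ℝ) (dist M E₂) ⊆ {M} := by
    rw [him1, him2]
    rintro z ⟨⟨s, hs, rfl⟩, ⟨t, ht, htz⟩⟩
    have hseq := geod_inj hρ ⟨hs.1, by linarith [hs.2]⟩ ⟨by linarith [ht.1], ht.2⟩ htz.symm
    have : s = dist E₁ E₂/2 := le_antisymm hs.2 (by rw [hseq]; exact ht.1)
    rw [this]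
    rfl
  have i23 : (fun s => ρ (dist E₁ E₂/2 + s)) '' Icc (0:ℝ) (dist M E₂) ∩
      π '' Icc (0:ℝ) (dist E₂ E₁) ⊆ {E₂} := by
    rw [him2]
    rintro z ⟨⟨t, ht, htz⟩, hzπ⟩
    have hzρ : z ∈ ρ '' Icc (0:ℝ) (dist E₁ E₂) :=
      ⟨t, ⟨by linarith [ht.1], ht.2⟩, htz⟩
    have := hint ⟨hzπ, hzρ⟩
    rcases this with h | h
    · exfalso
      rw [h] at htz
      have : t = 0 := geod_inj hρ ⟨by linarith [ht.1], ht.2⟩ ⟨le_refl _, by linarith⟩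
        (htz.trans (geod_start hρ).symm)
      rw [this] at ht
      linarith [ht.1]
    · exact h
  have i31 : π '' Icc (0:ℝ) (dist E₂ E₁) ∩ ρ '' Icc (0:ℝ) (dist E₁ M) ⊆ {E₁} := by
    rw [him1]
    rintro z ⟨hzπ, ⟨t, ht, htz⟩⟩
    have hzρ : z ∈ ρ '' Icc (0:ℝ) (dist E₁ E₂) := ⟨t, ⟨ht.1, by linarith [ht.2]⟩, htz⟩
    have := hint ⟨hzπ, hzρ⟩
    rcases this with h | h
    · exact h
    · exfalso
      rw [h] at htz
      have : t = dist E₁ E₂ := geod_inj hρ ⟨ht.1, by linarith [ht.2]⟩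
        ⟨by linarith, le_refl _⟩ (htz.trans (geod_end hρ).symm)
      rw [this] at ht
      linarith [ht.2]
  have n1M : E₁ ≠ M := by
    intro h
    have := geod_inj hρ ⟨le_refl 0, by linarith⟩ hhalf
      (by rw [← hM, ← h, geod_start hρ])
    linarith
  have nM2 : M ≠ E₂ := by
    intro h
    have := geod_inj hρ hhalf hfull (by rw [← hM, h, geod_end hρ])
    linarith
  obtain ⟨P, hP, hsub⟩ := piece_of_tri htg hside1 hside2 hπ n1M nM2 hne.symm i12 i23 i31
  refine ⟨P, hP, ?_⟩
  have himtot : ρ '' Icc (0:ℝ) (dist E₁ E₂) =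
      ρ '' Icc (0:ℝ) (dist E₁ E₂/2) ∪ ρ '' Icc (dist E₁ E₂/2) (dist E₁ E₂) := by
    rw [← Set.image_union, Set.Icc_union_Icc_eq_Icc (by linarith) (by linarith)]
  intro z hz
  rcases hz with hz | hz
  · rw [himtot] at hz
    rcases hz with hz | hz
    · exact hsub (Or.inl (Or.inl (by rwa [him1])))
    · exact hsub (Or.inl (Or.inr (by rwa [him2])))
  · exact hsub (Or.inr hz)

/-- two geodesics with the same endpoints which differ somewhere: there is a piece
containing a common sub-bigon around the point of difference -/
theorem two_geods_piece (htg : IsTreeGraded X 𝒞) {γ₁ γ₂ : ℝ → X} {a b : X}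
    (h₁ : IsGeodesicFrom γ₁ a b) (h₂ : IsGeodesicFrom γ₂ a b) {t : ℝ}
    (ht : t ∈ Icc (0:ℝ) (dist a b)) (hne : γ₁ t ≠ γ₂ t) :
    ∃ P ∈ 𝒞, ∃ s₁ s₂ : ℝ, s₁ ∈ Icc (0:ℝ) (dist a b) ∧ s₂ ∈ Icc (0:ℝ) (dist a b) ∧
      s₁ < t ∧ t < s₂ ∧ γ₁ '' Icc s₁ s₂ ⊆ P ∧ γ₂ '' Icc s₁ s₂ ⊆ P ∧
      γ₁ s₁ = γ₂ s₁ ∧ γ₁ s₂ = γ₂ s₂ := by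
  set d := dist a b with hd
  have hEclosed : IsClosed {s | s ∈ Icc (0:ℝ) d ∧ γ₁ s = γ₂ s} := by
    have : {s | s ∈ Icc (0:ℝ) d ∧ γ₁ s = γ₂ s}
        = Icc (0:ℝ) d ∩ (fun s => dist (γ₁ s) (γ₂ s)) ⁻¹' {0} := by
      ext s
      simp only [Set.mem_setOf_eq, Set.mem_inter_iff, Set.mem_preimage,
        Set.mem_singleton_iff, dist_eq_zero]
    rw [this]
    exact (continuous_dist.comp_continuousOn
      ((geod_continuousOn h₁).prodMk (geod_continuousOn h₂))).preimage_isClosed_of_isClosed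
      isClosed_Icc isClosed_singleton
  have h0E : (0:ℝ) ∈ {s | s ∈ Icc (0:ℝ) d ∧ γ₁ s = γ₂ s} :=
    ⟨⟨le_refl _, dist_nonneg⟩, by rw [geod_start h₁, geod_start h₂]⟩
  have hdE : d ∈ {s | s ∈ Icc (0:ℝ) d ∧ γ₁ s = γ₂ s} :=
    ⟨⟨dist_nonneg, le_refl _⟩, by rw [geod_end h₁, geod_end h₂]⟩
  set E := {s | s ∈ Icc (0:ℝ) d ∧ γ₁ s = γ₂ s} with hE
  -- s₁ : last coincidence before t
  set E₁ := E ∩ Icc (0:ℝ) t with hE₁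
  have hE₁ne : E₁.Nonempty := ⟨0, h0E, le_refl _, ht.1⟩
  have hE₁bdd : BddAbove E₁ := ⟨t, fun s hs => hs.2.2⟩
  have hE₁closed : IsClosed E₁ := hEclosed.inter isClosed_Icc
  have hs₁mem : sSup E₁ ∈ E₁ := hE₁closed.csSup_mem hE₁ne hE₁bdd
  set s₁ := sSup E₁ with hs₁
  -- s₂ : first coincidence after t
  set E₂ := E ∩ Icc t d with hE₂
  have hE₂ne : E₂.Nonempty := ⟨d, hdE, ht.2, le_refl _⟩
  have hE₂bdd : BddBelow E₂ := ⟨t, fun s hs => hs.2.1⟩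
  have hE₂closed : IsClosed E₂ := hEclosed.inter isClosed_Icc
  have hs₂mem : sInf E₂ ∈ E₂ := hE₂closed.csInf_mem hE₂ne hE₂bdd
  set s₂ := sInf E₂ with hs₂
  have hs₁lt : s₁ < t := lt_of_le_of_ne hs₁mem.2.2 (fun h => hne (by rw [← h]; exact hs₁mem.1.2))
  have hs₂gt : t < s₂ := lt_of_le_of_ne hs₂mem.2.1 (fun h => hne (by rw [h]; exact hs₂mem.1.2))
  have hs₁Icc : s₁ ∈ Icc (0:ℝ) d := hs₁mem.1.1
  have hs₂Icc : s₂ ∈ Icc (0:ℝ) d := hs₂mem.1.1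
  have hnomid : ∀ s ∈ Ioo s₁ s₂, γ₁ s ≠ γ₂ s := by
    intro s hs heq
    have hsIcc : s ∈ Icc (0:ℝ) d := ⟨le_trans hs₁Icc.1 (le_of_lt hs.1),
      le_trans (le_of_lt hs.2) hs₂Icc.2⟩
    rcases le_total s t with hle | hle
    · have : s ∈ E₁ := ⟨⟨hsIcc, heq⟩, le_trans hs₁Icc.1 (le_of_lt hs.1), hle⟩
      have := le_csSup hE₁bdd this
      linarith [hs.1]
    · have : s ∈ E₂ := ⟨⟨hsIcc, heq⟩, hle, hsIcc.2⟩
      have := csInf_le hE₂bdd this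
      linarith [hs.2]
  -- the bigon between parameters s₁ and s₂
  obtain ⟨hdist1, hside, himside⟩ := sub_geod h₁ hs₁Icc hs₂Icc (by linarith)
  obtain ⟨hdist2, hπ0, himπ⟩ := subrev_geod h₂ hs₁Icc hs₂Icc (by linarith)
  have he1 : γ₂ s₁ = γ₁ s₁ := hs₁mem.1.2.symm
  have he2 : γ₂ s₂ = γ₁ s₂ := hs₂mem.1.2.symm
  rw [he1, he2] at hπ0 himπ hdist2
  have hneE : γ₁ s₁ ≠ γ₁ s₂ := by
    intro h
    have := geod_inj h₁ hs₁Icc hs₂Icc h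
    linarith
  have hint : (fun s => γ₂ (s₂ - s)) '' Icc (0:ℝ) (dist (γ₁ s₂) (γ₁ s₁)) ∩
      (fun s => γ₁ (s₁ + s)) '' Icc (0:ℝ) (dist (γ₁ s₁) (γ₁ s₂)) ⊆ {γ₁ s₁, γ₁ s₂} := by
    rw [himπ, himside]
    rintro z ⟨⟨r, hr, hrz⟩, ⟨s, hs, hsz⟩⟩
    have hrIcc : r ∈ Icc (0:ℝ) d := ⟨le_trans hs₁Icc.1 hr.1, le_trans hr.2 hs₂Icc.2⟩
    have hsIcc : s ∈ Icc (0:ℝ) d := ⟨le_trans hs₁Icc.1 hs.1, le_trans hs.2 hs₂Icc.2⟩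
    have hdr : dist a z = r := by rw [← hrz]; exact geod_dist_start h₂ hrIcc
    have hds : dist a z = s := by rw [← hsz]; exact geod_dist_start h₁ hsIcc
    have hrs : r = s := by rw [← hdr, hds]
    rw [hrs] at hrz hr
    have heq : γ₁ s = γ₂ s := by rw [hsz, hrz]
    by_cases hc1 : s = s₁
    · refine Set.mem_insert_iff.mpr (Or.inl ?_)
      rw [← hsz, hc1]
    · by_cases hc2 : s = s₂
      · refine Set.mem_insert_iff.mpr (Or.inr ?_)
        rw [← hsz, hc2]
        rfl
      · exfalso
        exact hnomid s ⟨lt_of_le_of_ne hr.1 (Ne.symm hc1), lt_of_le_of_ne hs.2 hc2⟩ heq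
  obtain ⟨P, hP, hsub⟩ := piece_of_bigon htg hside hπ0 hneE hint
  refine ⟨P, hP, s₁, s₂, hs₁Icc, hs₂Icc, hs₁lt, hs₂gt, ?_, ?_, hs₁mem.1.2, hs₂mem.1.2⟩
  · intro z hz
    exact hsub (Or.inl (by rwa [himside]))
  · intro z hz
    exact hsub (Or.inr (by rwa [himπ]))

/-- any geodesic between two points of a piece stays in the piece -/
theorem geod_in_piece (htg : IsTreeGraded X 𝒞) {P : Set X} (hP : P ∈ 𝒞) {p q : X}
    (hp : p ∈ P) (hq : q ∈ P) {ν : ℝ → X} (hν : IsGeodesicFrom ν p q) :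
    ν '' Icc (0:ℝ) (dist p q) ⊆ P := by
  obtain ⟨ν', hν', hν'P⟩ := htg.geodesic P hP p hp q hq
  rintro z ⟨t, ht, rfl⟩
  by_cases heq : ν t = ν' t
  · rw [heq]
    exact hν'P ⟨t, ht, rfl⟩
  · obtain ⟨P', hP', s₁, s₂, hs₁, hs₂, hlt₁, hlt₂, hsub₁, hsub₂, he₁, he₂⟩ :=
      two_geods_piece htg hν hν' ht heq
    have hw₁P : ν' s₁ ∈ P := hν'P ⟨s₁, hs₁, rfl⟩
    have hw₂P : ν' s₂ ∈ P := hν'P ⟨s₂, hs₂, rfl⟩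
    have hw₁P' : ν' s₁ ∈ P' := by rw [← he₁]; exact hsub₁ ⟨s₁, ⟨le_refl _, by linarith⟩, rfl⟩
    have hw₂P' : ν' s₂ ∈ P' := by rw [← he₂]; exact hsub₁ ⟨s₂, ⟨by linarith, le_refl _⟩, rfl⟩
    have hwne : ν' s₁ ≠ ν' s₂ := by
      rw [← he₁, ← he₂]
      intro h
      have := geod_inj hν hs₁ hs₂ h
      linarith
    by_cases hPP : P = P'
    · rw [hPP]
      exact hsub₁ ⟨t, ⟨le_of_lt hlt₁, le_of_lt hlt₂⟩, rfl⟩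
    · exact absurd (htg.t1 P hP P' hP' hPP ⟨hw₁P, hw₁P'⟩ ⟨hw₂P, hw₂P'⟩) hwne

/-- points of a geodesic between two parameters hitting a piece stay in the piece -/
theorem hit_interval (htg : IsTreeGraded X 𝒞) {P : Set X} (hP : P ∈ 𝒞) {γ : ℝ → X}
    {x y : X} (hγ : IsGeodesicFrom γ x y) {t₁ t₂ t : ℝ}
    (ht₁ : t₁ ∈ Icc (0:ℝ) (dist x y)) (ht₂ : t₂ ∈ Icc (0:ℝ) (dist x y))
    (hp₁ : γ t₁ ∈ P) (hp₂ : γ t₂ ∈ P) (ht : t ∈ Icc t₁ t₂) : γ t ∈ P := by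
  have h12 : t₁ ≤ t₂ := le_trans ht.1 ht.2
  obtain ⟨hdist, hsub, himg⟩ := sub_geod hγ ht₁ ht₂ h12
  have := geod_in_piece htg hP hp₁ hp₂ hsub
  rw [himg] at this
  exact this ⟨t, ht, rfl⟩

theorem AvoidChain.start_ne {m c b : X} {j : ℕ} (h : AvoidChain m j c b) (hb : b ≠ m) :
    c ≠ m := by
  cases j with
  | zero =>
    have h' : c = b := h
    rw [h']; exact hb
  | succ j =>
    obtain ⟨e, ν, hν, hm, _⟩ := h
    intro hcm
    exact hm ⟨0, ⟨le_refl _, dist_nonneg⟩, by rw [geod_start hν, hcm]⟩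

end TGaux

namespace TGaux

open Set

variable {X : Type*} [MetricSpace X] {𝒞 : Set (Set X)}

/-- no piece meets the geodesic strictly on both sides of parameter `t₀` -/
def NoStraddle (𝒞 : Set (Set X)) (γ : ℝ → X) (d t₀ : ℝ) : Prop :=
  ¬ ∃ P ∈ 𝒞, ∃ s u : ℝ, s ∈ Icc (0:ℝ) d ∧ u ∈ Icc (0:ℝ) d ∧ s < t₀ ∧ t₀ < u ∧
      γ s ∈ P ∧ γ u ∈ P

theorem cutp_noStraddle (htg : IsTreeGraded X 𝒞) {γ : ℝ → X} {x y : X}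
    (hγ : IsGeodesicFrom γ x y) {m : X} (hm : m ∈ cutpSet 𝒞 γ (dist x y)) {t : ℝ}
    (ht : t ∈ Icc (0:ℝ) (dist x y)) (hγt : γ t = m) :
    NoStraddle 𝒞 γ (dist x y) t := by
  obtain ⟨t', ht', hγt', hno⟩ := hm
  have htt : t' = t := geod_inj hγ ht' ht (hγt'.trans hγt.symm)
  subst htt
  rintro ⟨P, hP, s, u, hsI, huI, hst, htu, hsP, huP⟩
  set d := dist x y with hd
  set S := {r | r ∈ Icc (0:ℝ) d ∧ γ r ∈ P} with hS
  have hSclosed : IsClosed S := hit_closed hγ (htg.closed P hP)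
  have hSne : S.Nonempty := ⟨s, hsI, hsP⟩
  have hSbddA : BddAbove S := ⟨d, fun r hr => hr.1.2⟩
  have hSbddB : BddBelow S := ⟨0, fun r hr => hr.1.1⟩
  have hαmem : sInf S ∈ S := hSclosed.csInf_mem hSne hSbddB
  have hβmem : sSup S ∈ S := hSclosed.csSup_mem hSne hSbddA
  set α := sInf S with hα
  set β := sSup S with hβ
  have hconv : ∀ r ∈ Icc α β, r ∈ S := by
    intro r hr
    have hrI : r ∈ Icc (0:ℝ) d := ⟨le_trans hαmem.1.1 hr.1, le_trans hr.2 hβmem.1.2⟩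
    exact ⟨hrI, hit_interval htg hP hγ hαmem.1 hβmem.1 hαmem.2 hβmem.2 hr⟩
  have hαs : α ≤ s := csInf_le hSbddB ⟨hsI, hsP⟩
  have huβ : u ≤ β := le_csSup hSbddA ⟨huI, huP⟩
  apply hno
  refine ⟨P, hP, α, β, hαmem.1.1, by linarith, by linarith, hβmem.1.2, ?_⟩
  ext z
  constructor
  · rintro ⟨r, hr, rfl⟩
    have := hconv r hr
    exact ⟨⟨r, this.1, rfl⟩, this.2⟩
  · rintro ⟨⟨r, hrI, rfl⟩, hzP⟩
    have hrS : r ∈ S := ⟨hrI, hzP⟩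
    exact ⟨r, ⟨csInf_le hSbddB hrS, le_csSup hSbddA hrS⟩, rfl⟩

/-- specification of an "anchored side" of the point `m` for the separation engine -/
def SideSpec (𝒞 : Set (Set X)) (m : X) (A : X → Prop) : Prop :=
  ∀ p, A p → p ≠ m ∧ ∃ δ : ℝ → X, IsGeodesicFrom δ p m ∧
    (∀ s ∈ Ico (0:ℝ) (dist p m), A (δ s)) ∧
    (∀ R ∈ 𝒞, m ∈ R → (∃ s ∈ Ico (0:ℝ) (dist p m), δ s ∈ R) → ∀ q ∈ R, q ≠ m → A q)

theorem engine_base (htg : IsTreeGraded X 𝒞) {m : X} {LA RA : X → Prop}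
    (hLspec : SideSpec 𝒞 m LA) (hRspec : SideSpec 𝒞 m RA)
    (hCol : ∀ q, LA q → RA q → False) {a b : X} (ha : LA a) (hb : RA b)
    {σ : ℝ → X} (hσ : IsGeodesicFrom σ a b)
    (hmσ : m ∉ σ '' Icc (0:ℝ) (dist a b)) : False := by
  obtain ⟨hane, δL, hδL, hLpts, hLpc⟩ := hLspec a ha
  obtain ⟨hbne, δR, hδR, hRpts, hRpc⟩ := hRspec b hb
  have hda : 0 < dist a m := dist_pos.mpr hane
  have hdb : 0 < dist b m := dist_pos.mpr hbne
  have hLim : IsClosed (δL '' Icc (0:ℝ) (dist a m)) := (geod_image_compact hδL).isClosed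
  have hRim : IsClosed (δR '' Icc (0:ℝ) (dist b m)) := (geod_image_compact hδR).isClosed
  -- step A: either the two anchor geodesics collide away from m, or they meet only at m
  set W := {r | r ∈ Icc (0:ℝ) (dist b m) ∧ δR r ∈ δL '' Icc (0:ℝ) (dist a m)} with hW
  have hWclosed : IsClosed W := hit_closed hδR hLim
  have hWne : W.Nonempty := by
    refine ⟨dist b m, ⟨dist_nonneg, le_refl _⟩, ?_⟩
    rw [geod_end hδR]
    exact ⟨dist a m, ⟨dist_nonneg, le_refl _⟩, geod_end hδL⟩
  have hWbdd : BddBelow W := ⟨0, fun r hr => hr.1.1⟩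
  have hr₀mem : sInf W ∈ W := hWclosed.csInf_mem hWne hWbdd
  by_cases hr₀ : sInf W = dist b m
  swap
  · -- collision
    have hr₀lt : sInf W < dist b m := lt_of_le_of_ne hr₀mem.1.2 hr₀
    obtain ⟨s, hs, hse⟩ := hr₀mem.2
    have hzne : δR (sInf W) ≠ m := by
      intro h
      have : sInf W = dist b m := geod_inj hδR hr₀mem.1 ⟨dist_nonneg, le_refl _⟩
        (by rw [h, geod_end hδR])
      exact hr₀ this
    have hslt : s < dist a m := by
      rcases lt_or_eq_of_le hs.2 with h | h
      · exact h
      · exfalso; apply hzne; rw [← hse, h]; exact geod_end hδL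
    have hLz : LA (δR (sInf W)) := by rw [← hse]; exact hLpts s ⟨hs.1, hslt⟩
    have hRz : RA (δR (sInf W)) := hRpts (sInf W) ⟨hr₀mem.1.1, hr₀lt⟩
    exact hCol _ hLz hRz
  · -- the two anchor geodesics meet only at m
    have hdisj : ∀ z, z ∈ δL '' Icc (0:ℝ) (dist a m) →
        z ∈ δR '' Icc (0:ℝ) (dist b m) → z = m := by
      rintro z hzL ⟨r, hr, rfl⟩
      have : r ∈ W := ⟨hr, hzL⟩
      have := csInf_le hWbdd this
      rw [hr₀] at this
      have : r = dist b m := le_antisymm hr.2 this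
      rw [this]
      exact geod_end hδR
    -- extraction along σ
    set D := dist a b with hD
    set S₁ := {s | s ∈ Icc (0:ℝ) D ∧ σ s ∈ δL '' Icc (0:ℝ) (dist a m)} with hS₁
    have hS₁closed : IsClosed S₁ := hit_closed hσ hLim
    have hS₁ne : S₁.Nonempty := by
      refine ⟨0, ⟨le_refl _, dist_nonneg⟩, ?_⟩
      rw [geod_start hσ]
      exact ⟨0, ⟨le_refl _, dist_nonneg⟩, geod_start hδL⟩
    have hS₁bdd : BddAbove S₁ := ⟨D, fun r hr => hr.1.2⟩
    have hs₁mem : sSup S₁ ∈ S₁ := hS₁closed.csSup_mem hS₁ne hS₁bdd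
    set s₁ := sSup S₁ with hs₁
    obtain ⟨u₁, hu₁, hu₁e⟩ := hs₁mem.2
    have hp₁ne : σ s₁ ≠ m := fun h => hmσ ⟨s₁, hs₁mem.1, h⟩
    have hu₁lt : u₁ < dist a m := by
      rcases lt_or_eq_of_le hu₁.2 with h | h
      · exact h
      · exfalso; apply hp₁ne; rw [← hu₁e, h]; exact geod_end hδL
    set S₂ := {s | s ∈ Icc s₁ D ∧ σ s ∈ δR '' Icc (0:ℝ) (dist b m)} with hS₂
    have hS₂closed : IsClosed S₂ :=
      hit_closed' hσ hRim (fun r hr => ⟨le_trans hs₁mem.1.1 hr.1, le_trans hr.2 (le_refl _)⟩)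
    have hS₂ne : S₂.Nonempty := by
      refine ⟨D, ⟨hs₁mem.1.2, le_refl _⟩, ?_⟩
      rw [show σ D = b from geod_end hσ]
      exact ⟨0, ⟨le_refl _, dist_nonneg⟩, geod_start hδR⟩
    have hS₂bdd : BddBelow S₂ := ⟨s₁, fun r hr => hr.1.1⟩
    have hs₂mem : sInf S₂ ∈ S₂ := hS₂closed.csInf_mem hS₂ne hS₂bdd
    set s₂ := sInf S₂ with hs₂
    obtain ⟨u₂, hu₂, hu₂e⟩ := hs₂mem.2
    have hs₂I : s₂ ∈ Icc (0:ℝ) D := ⟨le_trans hs₁mem.1.1 hs₂mem.1.1, hs₂mem.1.2⟩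
    have hq₁ne : σ s₂ ≠ m := fun h => hmσ ⟨s₂, hs₂I, h⟩
    have hu₂lt : u₂ < dist b m := by
      rcases lt_or_eq_of_le hu₂.2 with h | h
      · exact h
      · exfalso; apply hq₁ne; rw [← hu₂e, h]; exact geod_end hδR
    have hs₁₂ : s₁ < s₂ := by
      rcases lt_or_eq_of_le hs₂mem.1.1 with h | h
      · exact h
      · exfalso
        apply hp₁ne
        apply hdisj (σ s₁) ⟨u₁, hu₁, hu₁e⟩
        rw [h]
        exact ⟨u₂, hu₂, hu₂e⟩
    have hafter : ∀ s ∈ Icc (0:ℝ) D, s₁ < s → σ s ∉ δL '' Icc (0:ℝ) (dist a m) := by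
      intro s hsI hgt hmem
      have := le_csSup hS₁bdd (⟨hsI, hmem⟩ : s ∈ S₁)
      linarith
    have hbefore : ∀ s ∈ Icc s₁ D, s < s₂ → σ s ∉ δR '' Icc (0:ℝ) (dist b m) := by
      intro s hsI hlt hmem
      have := csInf_le hS₂bdd (⟨hsI, hmem⟩ : s ∈ S₂)
      linarith
    -- the three sides of the simple triangle (σ s₁) — m — (σ s₂)
    obtain ⟨hdist1, hside1, him1⟩ := sub_geod' hδL hu₁ ⟨dist_nonneg, le_refl _⟩ hu₁.2
      hu₁e (geod_end hδL)
    obtain ⟨hdist2, hside2, him2⟩ := subrev_geod' hδR hu₂ ⟨dist_nonneg, le_refl _⟩ hu₂.2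
      (geod_end hδR) hu₂e
    obtain ⟨hdist3, hside3, him3⟩ := subrev_geod' hσ hs₁mem.1 hs₂I (le_of_lt hs₁₂) rfl rfl
    have i12 : (fun s => δL (u₁ + s)) '' Icc (0:ℝ) (dist (σ s₁) m) ∩
        (fun s => δR (dist b m - s)) '' Icc (0:ℝ) (dist m (σ s₂)) ⊆ {m} := by
      rw [him1, him2]
      intro z hz
      have hz1 : z ∈ δL '' Icc (0:ℝ) (dist a m) :=
        image_mono (f := δL) (Icc_subset_Icc hu₁.1 (le_refl _)) hz.1
      have hz2 : z ∈ δR '' Icc (0:ℝ) (dist b m) :=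
        image_mono (f := δR) (Icc_subset_Icc hu₂.1 (le_refl _)) hz.2
      exact hdisj z hz1 hz2
    have i23 : (fun s => δR (dist b m - s)) '' Icc (0:ℝ) (dist m (σ s₂)) ∩
        (fun s => σ (s₂ - s)) '' Icc (0:ℝ) (dist (σ s₂) (σ s₁)) ⊆ {σ s₂} := by
      rw [him2, him3]
      rintro z ⟨hzR, ⟨s, hsI, rfl⟩⟩
      have hsI' : s ∈ Icc s₁ D := ⟨hsI.1, le_trans hsI.2 hs₂mem.1.2⟩
      have hz2 : σ s ∈ δR '' Icc (0:ℝ) (dist b m) :=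
        image_mono (f := δR) (Icc_subset_Icc hu₂.1 (le_refl _)) hzR
      rcases lt_or_eq_of_le hsI.2 with h | h
      · exact absurd hz2 (hbefore s hsI' h)
      · rw [h]; rfl
    have i31 : (fun s => σ (s₂ - s)) '' Icc (0:ℝ) (dist (σ s₂) (σ s₁)) ∩
        (fun s => δL (u₁ + s)) '' Icc (0:ℝ) (dist (σ s₁) m) ⊆ {σ s₁} := by
      rw [him1, him3]
      rintro z ⟨⟨s, hsI, rfl⟩, hzL⟩
      have hsI' : s ∈ Icc (0:ℝ) D := ⟨le_trans hs₁mem.1.1 hsI.1, le_trans hsI.2 hs₂I.2⟩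
      have hz1 : σ s ∈ δL '' Icc (0:ℝ) (dist a m) :=
        image_mono (f := δL) (Icc_subset_Icc hu₁.1 (le_refl _)) hzL
      rcases lt_or_eq_of_le hsI.1 with h | h
      · exact absurd hz1 (hafter s hsI' h)
      · rw [← h]; rfl
    have hq₁p₁ : σ s₂ ≠ σ s₁ := by
      intro h
      apply hq₁ne
      apply hdisj (σ s₂) (by rw [h]; exact ⟨u₁, hu₁, hu₁e⟩) ⟨u₂, hu₂, hu₂e⟩
    obtain ⟨P, hP, hsub⟩ := piece_of_tri htg hside1 hside2 hside3 hp₁ne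
      (Ne.symm hq₁ne) hq₁p₁ i12 i23 i31
    have hmP : m ∈ P := by
      apply hsub
      left; left
      rw [him1]
      exact ⟨dist a m, ⟨hu₁.2, le_refl _⟩, geod_end hδL⟩
    have hp₁P : σ s₁ ∈ P := by
      apply hsub
      left; left
      rw [him1]
      exact ⟨u₁, ⟨le_refl _, hu₁.2⟩, hu₁e⟩
    have hq₁P : σ s₂ ∈ P := by
      apply hsub
      left; right
      rw [him2]
      exact ⟨u₂, ⟨le_refl _, hu₂.2⟩, hu₂e⟩
    have hLall := hLpc P hP hmP ⟨u₁, ⟨hu₁.1, hu₁lt⟩, by rw [hu₁e]; exact hp₁P⟩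
    have hRall := hRpc P hP hmP ⟨u₂, ⟨hu₂.1, hu₂lt⟩, by rw [hu₂e]; exact hq₁P⟩
    exact hCol (σ s₂) (hLall (σ s₂) hq₁P hq₁ne) (hRall (σ s₂) hq₁P hq₁ne)

end TGaux

namespace TGaux

open Set

variable {X : Type*} [MetricSpace X] {𝒞 : Set (Set X)}

/-- bigon where the second side is a subsegment of a geodesic `τ`, possibly reversed -/
theorem piece_of_bigon_seg (htg : IsTreeGraded X 𝒞) {ρ' : ℝ → X} {E₁ E₂ : X}
    (hρ' : IsGeodesicFrom ρ' E₁ E₂) (hne : E₁ ≠ E₂) {τ : ℝ → X} {u v : X}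
    (hτ : IsGeodesicFrom τ u v) {θ₁ θ₂ : ℝ}
    (hθ₁ : θ₁ ∈ Icc (0:ℝ) (dist u v)) (hθ₂ : θ₂ ∈ Icc (0:ℝ) (dist u v))
    (he₁ : τ θ₁ = E₁) (he₂ : τ θ₂ = E₂)
    (hint : ∀ z ∈ τ '' Icc (min θ₁ θ₂) (max θ₁ θ₂),
      z ∈ ρ' '' Icc (0:ℝ) (dist E₁ E₂) → z = E₁ ∨ z = E₂) :
    ∃ P ∈ 𝒞, ρ' '' Icc (0:ℝ) (dist E₁ E₂) ⊆ P := by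
  rcases le_total θ₁ θ₂ with hle | hle
  · obtain ⟨hdπ, hπ, himπ⟩ := subrev_geod' hτ hθ₁ hθ₂ hle he₂ he₁
    have hint' : (fun s => τ (θ₂ - s)) '' Icc (0:ℝ) (dist E₂ E₁) ∩
        ρ' '' Icc (0:ℝ) (dist E₁ E₂) ⊆ {E₁, E₂} := by
      rintro z ⟨hz1, hz2⟩
      rw [himπ] at hz1
      have := hint z (by rwa [min_eq_left hle, max_eq_right hle]) hz2
      rcases this with h | h
      · exact Set.mem_insert_iff.mpr (Or.inl h)
      · exact Set.mem_insert_iff.mpr (Or.inr h)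
    obtain ⟨P, hP, hsub⟩ := piece_of_bigon htg hρ' hπ hne hint'
    exact ⟨P, hP, fun z hz => hsub (Or.inl hz)⟩
  · obtain ⟨hdπ, hπ, himπ⟩ := sub_geod' hτ hθ₂ hθ₁ hle he₂ he₁
    have hint' : (fun s => τ (θ₂ + s)) '' Icc (0:ℝ) (dist E₂ E₁) ∩
        ρ' '' Icc (0:ℝ) (dist E₁ E₂) ⊆ {E₁, E₂} := by
      rintro z ⟨hz1, hz2⟩
      rw [himπ] at hz1
      have := hint z (by rwa [min_eq_right hle, max_eq_left hle]) hz2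
      rcases this with h | h
      · exact Set.mem_insert_iff.mpr (Or.inl h)
      · exact Set.mem_insert_iff.mpr (Or.inr h)
    obtain ⟨P, hP, hsub⟩ := piece_of_bigon htg hρ' hπ hne hint'
    exact ⟨P, hP, fun z hz => hsub (Or.inl hz)⟩

theorem engine (htg : IsTreeGraded X 𝒞) (hgeo : IsGeodesicSpace X) {m : X}
    {LA RA : X → Prop} (hLspec : SideSpec 𝒞 m LA) (hRspec : SideSpec 𝒞 m RA)
    (hCol : ∀ q, LA q → RA q → False) :
    ∀ j a b, LA a → RA b → AvoidChain m j a b → False := by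
  intro j
  induction j using Nat.strong_induction_on with
  | _ j ih =>
  intro a b ha hb hch
  match j, ih with
  | 0, _ =>
    have h' : a = b := hch
    subst h'
    exact hCol a ha hb
  | 1, _ =>
    obtain ⟨c, σ, hσ, hmσ, hcb⟩ := hch
    have h' : c = b := hcb
    subst h'
    exact engine_base htg hLspec hRspec hCol ha hb hσ hmσ
  | (j+2), ih =>
    obtain ⟨c₁, σ₁, hσ₁, hm₁, hrest1⟩ := hch
    obtain ⟨c₂, σ₂, hσ₂, hm₂, hrest2⟩ := hrest1
    by_cases hshort : ∃ ν : ℝ → X, IsGeodesicFrom ν a c₂ ∧ m ∉ ν '' Icc (0:ℝ) (dist a c₂)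
    · obtain ⟨ν, hν, hmν⟩ := hshort
      exact ih (j+1) (by omega) a b ha hb ⟨c₂, ν, hν, hmν, hrest2⟩
    have hane : a ≠ m := (hLspec a ha).1
    have hbne : b ≠ m := (hRspec b hb).1
    have hc₂ne : c₂ ≠ m := hrest2.start_ne hbne
    have hac₂ : a ≠ c₂ := by
      intro h
      apply hshort
      subst h
      refine ⟨(fun _ => a), const_geod a, ?_⟩
      rw [const_geod_image a]
      exact fun hmem => hane (Set.mem_singleton_iff.mp hmem).symm
    obtain ⟨ν₀, hν₀⟩ := hgeo a c₂
    have hmν₀ : m ∈ ν₀ '' Icc (0:ℝ) (dist a c₂) := by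
      by_contra h
      exact hshort ⟨ν₀, hν₀, h⟩
    have hadd : dist a c₂ = dist a m + dist m c₂ := (point_on_geod_add hν₀ hmν₀).symm
    obtain ⟨_, δL, hδL, hLpts, hLpc⟩ := hLspec a ha
    obtain ⟨δw, hδw⟩ := hgeo m c₂
    have hρ : IsGeodesicFrom (fun s => if s ≤ dist a m then δL s else δw (s - dist a m)) a c₂ :=
      concat_geod hδL hδw hadd
    set ρ : ℝ → X := fun s => if s ≤ dist a m then δL s else δw (s - dist a m) with hρdef
    have hρsm : ρ (dist a m) = m := by
      show (if dist a m ≤ dist a m then δL (dist a m) else _) = m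
      rw [if_pos (le_refl _)]
      exact geod_end hδL
    have hsmpos : 0 < dist a m := dist_pos.mpr hane
    have hwpos : 0 < dist m c₂ := dist_pos.mpr (Ne.symm hc₂ne)
    have hsmlt : dist a m < dist a c₂ := by rw [hadd]; linarith
    -- build the two-segment arc from a to c₂ inside the first two chain links
    by_cases hain : a ∈ σ₂ '' Icc (0:ℝ) (dist c₁ c₂)
    · obtain ⟨h, hh, hha⟩ := hain
      obtain ⟨hd', hg', him'⟩ := sub_geod' hσ₂ hh ⟨dist_nonneg, le_refl _⟩ hh.2 hha
        (geod_end hσ₂)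
      apply hshort
      refine ⟨_, hg', ?_⟩
      rw [him']
      intro hmem
      exact hm₂ (image_mono (f := σ₂) (Icc_subset_Icc hh.1 (le_refl _)) hmem)
    -- first contact of σ₁ with the image of σ₂
    set T := {s | s ∈ Icc (0:ℝ) (dist a c₁) ∧ σ₁ s ∈ σ₂ '' Icc (0:ℝ) (dist c₁ c₂)} with hT
    have hTclosed : IsClosed T := hit_closed hσ₁ (geod_image_compact hσ₂).isClosed
    have hTne : T.Nonempty := by
      refine ⟨dist a c₁, ⟨dist_nonneg, le_refl _⟩, ?_⟩
      rw [geod_end hσ₁]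
      exact ⟨0, ⟨le_refl _, dist_nonneg⟩, geod_start hσ₂⟩
    have hTbdd : BddBelow T := ⟨0, fun r hr => hr.1.1⟩
    have hh₁mem : sInf T ∈ T := hTclosed.csInf_mem hTne hTbdd
    set h₁ := sInf T with hh₁
    obtain ⟨h₂, hh₂, hh₂e⟩ := hh₁mem.2
    set A₁ := σ₁ '' Icc (0:ℝ) h₁ with hA₁
    set A₂ := σ₂ '' Icc h₂ (dist c₁ c₂) with hA₂
    have hA₁sub : A₁ ⊆ σ₁ '' Icc (0:ℝ) (dist a c₁) :=
      image_mono (f := σ₁) (Icc_subset_Icc (le_refl _) hh₁mem.1.2)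
    have hA₂sub : A₂ ⊆ σ₂ '' Icc (0:ℝ) (dist c₁ c₂) :=
      image_mono (f := σ₂) (Icc_subset_Icc hh₂.1 (le_refl _))
    have hA1A2 : ∀ z ∈ A₁, z ∈ σ₂ '' Icc (0:ℝ) (dist c₁ c₂) → z = σ₁ h₁ := by
      rintro z ⟨s, hs, rfl⟩ hmem
      have hsI : s ∈ Icc (0:ℝ) (dist a c₁) := ⟨hs.1, le_trans hs.2 hh₁mem.1.2⟩
      have hge : h₁ ≤ s := csInf_le hTbdd ⟨hsI, hmem⟩
      rw [le_antisymm hs.2 hge]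
    have hmA : m ∉ A₁ ∪ A₂ := by
      rintro (h | h)
      · exact hm₁ (hA₁sub h)
      · exact hm₂ (hA₂sub h)
    have haA₁ : a ∈ A₁ := ⟨0, ⟨le_refl _, hh₁mem.1.1⟩, geod_start hσ₁⟩
    have hc₂A₂ : c₂ ∈ A₂ := ⟨dist c₁ c₂, ⟨hh₂.2, le_refl _⟩, geod_end hσ₂⟩
    have hjpA₂ : σ₁ h₁ ∈ A₂ := ⟨h₂, ⟨le_refl _, hh₂.2⟩, hh₂e⟩
    have hjpA₁ : σ₁ h₁ ∈ A₁ := ⟨h₁, ⟨hh₁mem.1.1, le_refl _⟩, rfl⟩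
    have himAclosed : IsClosed (A₁ ∪ A₂) :=
      ((seg_compact hσ₁ (Icc_subset_Icc (le_refl _) hh₁mem.1.2)).union
        (seg_compact hσ₂ (Icc_subset_Icc hh₂.1 (le_refl _)))).isClosed
    -- extraction along ρ around m
    set Sm := {s | s ∈ Icc (0:ℝ) (dist a m) ∧ ρ s ∈ A₁ ∪ A₂} with hSm
    have hSmclosed : IsClosed Sm :=
      hit_closed' hρ himAclosed (Icc_subset_Icc (le_refl _) (le_of_lt hsmlt))
    have hSmne : Sm.Nonempty :=
      ⟨0, ⟨le_refl _, dist_nonneg⟩, by rw [show ρ 0 = a from geod_start hρ]; exact Or.inl haA₁⟩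
    have hSmbdd : BddAbove Sm := ⟨dist a m, fun r hr => hr.1.2⟩
    have hsamem : sSup Sm ∈ Sm := hSmclosed.csSup_mem hSmne hSmbdd
    set sa := sSup Sm with hsadef
    have hsalt : sa < dist a m := by
      rcases lt_or_eq_of_le hsamem.1.2 with h | h
      · exact h
      · exfalso
        apply hmA
        rw [← hρsm, ← h]
        exact hsamem.2
    set Sp := {s | s ∈ Icc (dist a m) (dist a c₂) ∧ ρ s ∈ A₁ ∪ A₂} with hSp
    have hSpclosed : IsClosed Sp :=
      hit_closed' hρ himAclosed (Icc_subset_Icc dist_nonneg (le_refl _))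
    have hSpne : Sp.Nonempty :=
      ⟨dist a c₂, ⟨le_of_lt hsmlt, le_refl _⟩,
        by rw [show ρ (dist a c₂) = c₂ from geod_end hρ]; exact Or.inr hc₂A₂⟩
    have hSpbdd : BddBelow Sp := ⟨dist a m, fun r hr => hr.1.1⟩
    have hsbmem : sInf Sp ∈ Sp := hSpclosed.csInf_mem hSpne hSpbdd
    set sb := sInf Sp with hsbdef
    have hsbgt : dist a m < sb := by
      rcases lt_or_eq_of_le hsbmem.1.1 with h | h
      · exact h
      · exfalso
        apply hmA
        rw [← hρsm, h]
        exact hsbmem.2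
    have hsaI : sa ∈ Icc (0:ℝ) (dist a c₂) := ⟨hsamem.1.1, le_trans hsamem.1.2 (le_of_lt hsmlt)⟩
    have hsbI : sb ∈ Icc (0:ℝ) (dist a c₂) := ⟨le_trans dist_nonneg hsbmem.1.1, hsbmem.1.2⟩
    have hsab : sa < sb := lt_trans hsalt hsbgt
    have hnomid : ∀ s, sa < s → s < sb → s ∈ Icc (0:ℝ) (dist a c₂) → ρ s ∉ A₁ ∪ A₂ := by
      intro s h1 h2 hsI hmem
      rcases le_total s (dist a m) with h | h
      · have := le_csSup hSmbdd (⟨⟨hsI.1, h⟩, hmem⟩ : s ∈ Sm)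
        linarith
      · have := csInf_le hSpbdd (⟨⟨h, hsI.2⟩, hmem⟩ : s ∈ Sp)
        linarith
    obtain ⟨hdside, hside, himside⟩ := sub_geod' hρ hsaI hsbI (le_of_lt hsab) rfl rfl
    have hneab : ρ sa ≠ ρ sb := by
      intro h
      have := geod_inj hρ hsaI hsbI h
      linarith
    have hintA : ∀ z ∈ A₁ ∪ A₂, z ∈ ρ '' Icc sa sb → z = ρ sa ∨ z = ρ sb := by
      rintro z hzA ⟨s, hs, rfl⟩
      have hsI : s ∈ Icc (0:ℝ) (dist a c₂) := ⟨le_trans hsaI.1 hs.1, le_trans hs.2 hsbI.2⟩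
      rcases lt_or_eq_of_le hs.1 with h1 | h1
      · rcases lt_or_eq_of_le hs.2 with h2 | h2
        · exact absurd hzA (hnomid s h1 h2 hsI)
        · right; rw [h2]
      · left; rw [← h1]
    -- the main dichotomy: a piece containing the middle segment of ρ
    have hmain : ∃ P ∈ 𝒞, ρ '' Icc sa sb ⊆ P := by
      have hpmem : ρ sa ∈ A₁ ∪ A₂ := hsamem.2
      have hcmem : ρ sb ∈ A₁ ∪ A₂ := hsbmem.2
      -- helper for the single-segment (bigon) cases
      have hbigon : ∀ (τ : ℝ → X) (u v : X), IsGeodesicFrom τ u v →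
          ∀ θ₁ θ₂, θ₁ ∈ Icc (0:ℝ) (dist u v) → θ₂ ∈ Icc (0:ℝ) (dist u v) →
          τ θ₁ = ρ sa → τ θ₂ = ρ sb →
          (τ '' Icc (min θ₁ θ₂) (max θ₁ θ₂) ⊆ A₁ ∪ A₂) →
          ∃ P ∈ 𝒞, ρ '' Icc sa sb ⊆ P := by
        intro τ u v hτ θ₁ θ₂ hθ₁ hθ₂ he₁ he₂ hsubA
        have hint : ∀ z ∈ τ '' Icc (min θ₁ θ₂) (max θ₁ θ₂),
            z ∈ (fun s => ρ (sa + s)) '' Icc (0:ℝ) (dist (ρ sa) (ρ sb)) →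
            z = ρ sa ∨ z = ρ sb := by
          intro z hz1 hz2
          rw [himside] at hz2
          exact hintA z (hsubA hz1) hz2
        obtain ⟨P, hP, hsub⟩ := piece_of_bigon_seg htg hside hneab hτ hθ₁ hθ₂ he₁ he₂ hint
        rw [himside] at hsub
        exact ⟨P, hP, hsub⟩
      -- helper for the two-segment (corner) cases
      have hcorner : ∀ θp θc, θp ∈ Icc (0:ℝ) h₁ → θc ∈ Icc h₂ (dist c₁ c₂) →
          σ₁ θp = ρ sa → σ₂ θc = ρ sb → ρ sa ∉ A₂ → ρ sb ∉ A₁ →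
          ∃ P ∈ 𝒞, ρ '' Icc sa sb ⊆ P := by
        intro θp θc hθp hθc hep hec hpA2 hcA1
        have hθpI : θp ∈ Icc (0:ℝ) (dist a c₁) := ⟨hθp.1, le_trans hθp.2 hh₁mem.1.2⟩
        have hθcI : θc ∈ Icc (0:ℝ) (dist c₁ c₂) := ⟨le_trans hh₂.1 hθc.1, hθc.2⟩
        have hh₁I : h₁ ∈ Icc (0:ℝ) (dist a c₁) := hh₁mem.1
        have hh₂I : h₂ ∈ Icc (0:ℝ) (dist c₁ c₂) := hh₂
        -- τ₁ : ρ sb → jp along σ₂ reversed ; τ₂ : jp → ρ sa along σ₁ reversed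
        obtain ⟨hdτ₁, hτ₁, himτ₁⟩ := subrev_geod' hσ₂ hh₂I hθcI hθc.1 hec hh₂e
        obtain ⟨hdτ₂, hτ₂, himτ₂⟩ := subrev_geod' hσ₁ hθpI hh₁I hθp.2 rfl hep
        have n2J : ρ sb ≠ σ₁ h₁ := by
          intro h
          exact hcA1 (by rw [h]; exact hjpA₁)
        have nJ1 : σ₁ h₁ ≠ ρ sa := by
          intro h
          exact hpA2 (by rw [← h]; exact hjpA₂)
        have i12 : (fun s => ρ (sa + s)) '' Icc (0:ℝ) (dist (ρ sa) (ρ sb)) ∩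
            (fun s => σ₂ (θc - s)) '' Icc (0:ℝ) (dist (ρ sb) (σ₁ h₁)) ⊆ {ρ sb} := by
          rw [himside, himτ₁]
          rintro z ⟨hz1, hz2⟩
          have hzA : z ∈ A₁ ∪ A₂ :=
            Or.inr (image_mono (f := σ₂) (Icc_subset_Icc (le_refl _) hθc.2) hz2)
          rcases hintA z hzA hz1 with h | h
          · exfalso
            apply hpA2
            rw [← h]
            exact image_mono (f := σ₂) (Icc_subset_Icc (le_refl _) hθc.2) hz2
          · rw [h]; rfl
        have i23 : (fun s => σ₂ (θc - s)) '' Icc (0:ℝ) (dist (ρ sb) (σ₁ h₁)) ∩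
            (fun s => σ₁ (h₁ - s)) '' Icc (0:ℝ) (dist (σ₁ h₁) (ρ sa)) ⊆ {σ₁ h₁} := by
          rw [himτ₁, himτ₂]
          rintro z ⟨hz1, hz2⟩
          have hzA1 : z ∈ A₁ := image_mono (f := σ₁) (Icc_subset_Icc hθp.1 (le_refl _)) hz2
          have hzσ₂ : z ∈ σ₂ '' Icc (0:ℝ) (dist c₁ c₂) :=
            image_mono (f := σ₂) (Icc_subset_Icc hh₂.1 hθc.2) hz1
          rw [hA1A2 z hzA1 hzσ₂]
          rfl
        have i31 : (fun s => σ₁ (h₁ - s)) '' Icc (0:ℝ) (dist (σ₁ h₁) (ρ sa)) ∩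
            (fun s => ρ (sa + s)) '' Icc (0:ℝ) (dist (ρ sa) (ρ sb)) ⊆ {ρ sa} := by
          rw [himside, himτ₂]
          rintro z ⟨hz1, hz2⟩
          have hzA : z ∈ A₁ ∪ A₂ :=
            Or.inl (image_mono (f := σ₁) (Icc_subset_Icc hθp.1 (le_refl _)) hz1)
          rcases hintA z hzA hz2 with h | h
          · rw [h]; rfl
          · exfalso
            apply hcA1
            rw [← h]
            exact image_mono (f := σ₁) (Icc_subset_Icc hθp.1 (le_refl _)) hz1
        obtain ⟨P, hP, hsub⟩ := piece_of_tri htg hside hτ₁ hτ₂ hneab n2J nJ1 i12 i23 i31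
        refine ⟨P, hP, ?_⟩
        rw [← himside]
        exact fun z hz => hsub (Or.inl (Or.inl hz))
      by_cases hpA2 : ρ sa ∈ A₂
      · by_cases hcA2 : ρ sb ∈ A₂
        · -- both on σ₂
          obtain ⟨θ₁, hθ₁, he₁⟩ := hpA2
          obtain ⟨θ₂, hθ₂, he₂⟩ := hcA2
          refine hbigon σ₂ c₁ c₂ hσ₂ θ₁ θ₂ ⟨le_trans hh₂.1 hθ₁.1, hθ₁.2⟩
            ⟨le_trans hh₂.1 hθ₂.1, hθ₂.2⟩ he₁ he₂ ?_
          intro z hz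
          refine Or.inr (image_mono (f := σ₂) ?_ hz)
          intro r hr
          exact ⟨le_trans (le_min hθ₁.1 hθ₂.1) hr.1, le_trans hr.2 (max_le hθ₁.2 hθ₂.2)⟩
        · -- ρ sa on σ₂, ρ sb not on A₂ hence on A₁ : corner case (reversed roles)
          have hcA1 : ρ sb ∈ A₁ := by
            rcases hcmem with h | h
            · exact h
            · exact absurd h hcA2
          by_cases hpA1 : ρ sa ∈ A₁
          · -- both on σ₁
            obtain ⟨θ₁, hθ₁, he₁⟩ := hpA1
            obtain ⟨θ₂, hθ₂, he₂⟩ := hcA1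
            refine hbigon σ₁ a c₁ hσ₁ θ₁ θ₂ ⟨hθ₁.1, le_trans hθ₁.2 hh₁mem.1.2⟩
              ⟨hθ₂.1, le_trans hθ₂.2 hh₁mem.1.2⟩ he₁ he₂ ?_
            intro z hz
            refine Or.inl (image_mono (f := σ₁) ?_ hz)
            intro r hr
            exact ⟨le_trans (le_min hθ₁.1 hθ₂.1) hr.1, le_trans hr.2 (max_le hθ₁.2 hθ₂.2)⟩
          · -- genuine corner with ρ sa ∈ A₂ \ A₁ and ρ sb ∈ A₁ \ A₂ :
            -- apply the corner argument to the reversed middle segment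
            obtain ⟨θp, hθp, hep⟩ := hpA2
            obtain ⟨θc, hθc, hec⟩ := hcA1
            obtain ⟨hdside', hside', himside'⟩ :=
              subrev_geod' hρ hsaI hsbI (le_of_lt hsab) rfl rfl
            have hθpI : θp ∈ Icc (0:ℝ) (dist c₁ c₂) := ⟨le_trans hh₂.1 hθp.1, hθp.2⟩
            have hθcI : θc ∈ Icc (0:ℝ) (dist a c₁) := ⟨hθc.1, le_trans hθc.2 hh₁mem.1.2⟩
            have hh₁I : h₁ ∈ Icc (0:ℝ) (dist a c₁) := hh₁mem.1
            obtain ⟨hdτ₁, hτ₁, himτ₁⟩ := subrev_geod' hσ₂ hh₂ hθpI hθp.1 hep hh₂e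
            obtain ⟨hdτ₂, hτ₂, himτ₂⟩ := subrev_geod' hσ₁ hθcI hh₁I hθc.2 rfl hec
            have hba : ρ sb ≠ ρ sa := Ne.symm hneab
            have n2J : ρ sa ≠ σ₁ h₁ := fun h => hpA1 (by rw [h]; exact hjpA₁)
            have nJ1 : σ₁ h₁ ≠ ρ sb := fun h => hcA2 (by rw [← h]; exact hjpA₂)
            have i12 : (fun s => ρ (sb - s)) '' Icc (0:ℝ) (dist (ρ sb) (ρ sa)) ∩
                (fun s => σ₂ (θp - s)) '' Icc (0:ℝ) (dist (ρ sa) (σ₁ h₁)) ⊆ {ρ sa} := by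
              rw [himside', himτ₁]
              rintro z ⟨hz1, hz2⟩
              have hzA : z ∈ A₁ ∪ A₂ :=
                Or.inr (image_mono (f := σ₂) (Icc_subset_Icc (le_refl _) hθp.2) hz2)
              rcases hintA z hzA hz1 with h | h
              · rw [h]; rfl
              · exfalso
                apply hcA2
                rw [← h]
                exact image_mono (f := σ₂) (Icc_subset_Icc (le_refl _) hθp.2) hz2
            have i23 : (fun s => σ₂ (θp - s)) '' Icc (0:ℝ) (dist (ρ sa) (σ₁ h₁)) ∩
                (fun s => σ₁ (h₁ - s)) '' Icc (0:ℝ) (dist (σ₁ h₁) (ρ sb)) ⊆ {σ₁ h₁} := by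
              rw [himτ₁, himτ₂]
              rintro z ⟨hz1, hz2⟩
              have hzA1 : z ∈ A₁ := image_mono (f := σ₁) (Icc_subset_Icc hθc.1 (le_refl _)) hz2
              have hzσ₂ : z ∈ σ₂ '' Icc (0:ℝ) (dist c₁ c₂) :=
                image_mono (f := σ₂) (Icc_subset_Icc hh₂.1 hθp.2) hz1
              rw [hA1A2 z hzA1 hzσ₂]
              rfl
            have i31 : (fun s => σ₁ (h₁ - s)) '' Icc (0:ℝ) (dist (σ₁ h₁) (ρ sb)) ∩
                (fun s => ρ (sb - s)) '' Icc (0:ℝ) (dist (ρ sb) (ρ sa)) ⊆ {ρ sb} := by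
              rw [himside', himτ₂]
              rintro z ⟨hz1, hz2⟩
              have hzA : z ∈ A₁ ∪ A₂ :=
                Or.inl (image_mono (f := σ₁) (Icc_subset_Icc hθc.1 (le_refl _)) hz1)
              rcases hintA z hzA hz2 with h | h
              · exfalso
                apply hpA1
                rw [← h]
                exact image_mono (f := σ₁) (Icc_subset_Icc hθc.1 (le_refl _)) hz1
              · rw [h]; rfl
            obtain ⟨P, hP, hsub⟩ := piece_of_tri htg hside' hτ₁ hτ₂ hba n2J nJ1 i12 i23 i31
            refine ⟨P, hP, ?_⟩
            rw [← himside']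
            exact fun z hz => hsub (Or.inl (Or.inl hz))
      · have hpA1 : ρ sa ∈ A₁ := by
          rcases hpmem with h | h
          · exact h
          · exact absurd h hpA2
        by_cases hcA2 : ρ sb ∈ A₂
        · by_cases hcA1 : ρ sb ∈ A₁
          · obtain ⟨θ₁, hθ₁, he₁⟩ := hpA1
            obtain ⟨θ₂, hθ₂, he₂⟩ := hcA1
            refine hbigon σ₁ a c₁ hσ₁ θ₁ θ₂ ⟨hθ₁.1, le_trans hθ₁.2 hh₁mem.1.2⟩
              ⟨hθ₂.1, le_trans hθ₂.2 hh₁mem.1.2⟩ he₁ he₂ ?_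
            intro z hz
            refine Or.inl (image_mono (f := σ₁) ?_ hz)
            intro r hr
            exact ⟨le_trans (le_min hθ₁.1 hθ₂.1) hr.1, le_trans hr.2 (max_le hθ₁.2 hθ₂.2)⟩
          · obtain ⟨θp, hθp, hep⟩ := hpA1
            obtain ⟨θc, hθc, hec⟩ := hcA2
            exact hcorner θp θc hθp hθc hep hec hpA2 hcA1
        · have hcA1 : ρ sb ∈ A₁ := by
            rcases hcmem with h | h
            · exact h
            · exact absurd h hcA2
          obtain ⟨θ₁, hθ₁, he₁⟩ := hpA1
          obtain ⟨θ₂, hθ₂, he₂⟩ := hcA1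
          refine hbigon σ₁ a c₁ hσ₁ θ₁ θ₂ ⟨hθ₁.1, le_trans hθ₁.2 hh₁mem.1.2⟩
            ⟨hθ₂.1, le_trans hθ₂.2 hh₁mem.1.2⟩ he₁ he₂ ?_
          intro z hz
          refine Or.inl (image_mono (f := σ₁) ?_ hz)
          intro r hr
          exact ⟨le_trans (le_min hθ₁.1 hθ₂.1) hr.1, le_trans hr.2 (max_le hθ₁.2 hθ₂.2)⟩
    -- use the piece to advance the left anchor and shorten the chain
    obtain ⟨P, hP, hPsub⟩ := hmain
    have hmP : m ∈ P := hPsub ⟨dist a m, ⟨le_of_lt hsalt, le_of_lt hsbgt⟩, hρsm⟩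
    have hδLsa : ρ sa = δL sa := by
      show (if sa ≤ dist a m then δL sa else _) = δL sa
      rw [if_pos (le_of_lt hsalt)]
    have hpP : ρ sa ∈ P := hPsub ⟨sa, ⟨le_refl _, le_of_lt hsab⟩, rfl⟩
    have hLall := hLpc P hP hmP ⟨sa, ⟨hsamem.1.1, hsalt⟩, by rw [← hδLsa]; exact hpP⟩
    have hcP : ρ sb ∈ P := hPsub ⟨sb, ⟨le_of_lt hsab, le_refl _⟩, rfl⟩
    have hcnem : ρ sb ≠ m := by
      intro h
      have := geod_inj hρ hsbI ⟨dist_nonneg, le_of_lt hsmlt⟩ (h.trans hρsm.symm)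
      linarith
    have hLc : LA (ρ sb) := hLall (ρ sb) hcP hcnem
    have hceval : ρ sb = δw (sb - dist a m) := concat_eval_ge hδL hδw (le_of_lt hsbgt)
    have hwparam : sb - dist a m ∈ Icc (0:ℝ) (dist m c₂) := by
      constructor
      · linarith
      · have := hsbmem.1.2
        rw [hadd] at this
        linarith
    obtain ⟨hdlink, hlink, himlink⟩ := sub_geod' hδw hwparam ⟨dist_nonneg, le_refl _⟩
      hwparam.2 hceval.symm (geod_end hδw)
    have hmlink : m ∉ (fun s => δw (sb - dist a m + s)) ''
        Icc (0:ℝ) (dist (ρ sb) c₂) := by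
      rw [himlink]
      rintro ⟨r, hr, hre⟩
      have hrI : r ∈ Icc (0:ℝ) (dist m c₂) := ⟨le_trans hwparam.1 hr.1, hr.2⟩
      have : r = 0 := geod_inj hδw hrI ⟨le_refl _, dist_nonneg⟩
        (by rw [hre, geod_start hδw])
      rw [this] at hr
      have := hr.1
      linarith
    exact ih (j+1) (by omega) (ρ sb) b hLc hb ⟨c₂, _, hlink, hmlink, hrest2⟩

end TGaux

namespace TGaux

open Set

variable {X : Type*} [MetricSpace X] {𝒞 : Set (Set X)}

/-- "left of the point `γ t₀`" : either a point of `γ` strictly before `t₀`, or a point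
(other than `γ t₀`) of a piece through `γ t₀` which also meets `γ` strictly before `t₀`. -/
def LeftOf (𝒞 : Set (Set X)) (γ : ℝ → X) (t₀ : ℝ) (p : X) : Prop :=
  (∃ a' ∈ Ico (0:ℝ) t₀, γ a' = p) ∨
  (p ≠ γ t₀ ∧ ∃ P ∈ 𝒞, γ t₀ ∈ P ∧ p ∈ P ∧ ∃ t₁ ∈ Ico (0:ℝ) t₀, γ t₁ ∈ P)

def RightOf (𝒞 : Set (Set X)) (γ : ℝ → X) (d t₀ : ℝ) (p : X) : Prop :=
  (∃ b' ∈ Ioc t₀ d, γ b' = p) ∨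
  (p ≠ γ t₀ ∧ ∃ P ∈ 𝒞, γ t₀ ∈ P ∧ p ∈ P ∧ ∃ t₂ ∈ Ioc t₀ d, γ t₂ ∈ P)

theorem sep_general (htg : IsTreeGraded X 𝒞) (hgeo : IsGeodesicSpace X)
    {γ : ℝ → X} {x y : X} (hγ : IsGeodesicFrom γ x y) {t₀ : ℝ}
    (ht₀ : t₀ ∈ Ioo (0:ℝ) (dist x y)) (hns : NoStraddle 𝒞 γ (dist x y) t₀) :
    ∀ j p q, LeftOf 𝒞 γ t₀ p → RightOf 𝒞 γ (dist x y) t₀ q →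
      ¬ AvoidChain (γ t₀) j p q := by
  set d := dist x y with hd
  set m := γ t₀ with hm
  have ht₀I : t₀ ∈ Icc (0:ℝ) d := ⟨le_of_lt ht₀.1, le_of_lt ht₀.2⟩
  have hLspec : SideSpec 𝒞 m (LeftOf 𝒞 γ t₀) := by
    intro p hp
    rcases hp with ⟨a', ha', rfl⟩ | ⟨hpne, P, hP, hmP, hpP, t₁, ht₁, ht₁P⟩
    · have ha'I : a' ∈ Icc (0:ℝ) d := ⟨ha'.1, le_trans (le_of_lt ha'.2) ht₀I.2⟩
      have hpne : γ a' ≠ m := by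
        intro h
        have := geod_inj hγ ha'I ht₀I h
        exact absurd this (ne_of_lt ha'.2)
      obtain ⟨hdd, hδ, himδ⟩ := sub_geod' hγ ha'I ht₀I (le_of_lt ha'.2) rfl rfl
      refine ⟨hpne, _, hδ, ?_, ?_⟩
      · intro s hs
        rw [hdd] at hs
        refine Or.inl ⟨a' + s, ⟨by linarith [hs.1, ha'.1], by linarith [hs.2]⟩, rfl⟩
      · rintro R hR hmR ⟨s, hs, hsR⟩ q hqR hqne
        rw [hdd] at hs
        exact Or.inr ⟨hqne, R, hR, hmR, hqR,
          a' + s, ⟨by linarith [hs.1, ha'.1], by linarith [hs.2]⟩, hsR⟩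
    · obtain ⟨δ, hδ⟩ := hgeo p m
      have hδP : δ '' Icc (0:ℝ) (dist p m) ⊆ P := geod_in_piece htg hP hpP hmP hδ
      refine ⟨hpne, δ, hδ, ?_, ?_⟩
      · intro s hs
        have hsne : δ s ≠ m := by
          intro h
          have := geod_inj hδ ⟨hs.1, le_of_lt hs.2⟩ ⟨dist_nonneg, le_refl _⟩
            (by rw [h, geod_end hδ])
          exact absurd this (ne_of_lt hs.2)
        exact Or.inr ⟨hsne, P, hP, hmP, hδP ⟨s, ⟨hs.1, le_of_lt hs.2⟩, rfl⟩, t₁, ht₁, ht₁P⟩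
      · rintro R hR hmR ⟨s, hs, hsR⟩ q hqR hqne
        have hsP : δ s ∈ P := hδP ⟨s, ⟨hs.1, le_of_lt hs.2⟩, rfl⟩
        have hsne : δ s ≠ m := by
          intro h
          have := geod_inj hδ ⟨hs.1, le_of_lt hs.2⟩ ⟨dist_nonneg, le_refl _⟩
            (by rw [h, geod_end hδ])
          exact absurd this (ne_of_lt hs.2)
        by_cases hRP : R = P
        · subst hRP
          exact Or.inr ⟨hqne, R, hR, hmR, hqR, t₁, ht₁, ht₁P⟩
        · exact absurd (htg.t1 R hR P hP hRP ⟨hsR, hsP⟩ ⟨hmR, hmP⟩) hsne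
  have hRspec : SideSpec 𝒞 m (RightOf 𝒞 γ d t₀) := by
    intro p hp
    rcases hp with ⟨b', hb', rfl⟩ | ⟨hpne, P, hP, hmP, hpP, t₂, ht₂, ht₂P⟩
    · have hb'I : b' ∈ Icc (0:ℝ) d := ⟨le_trans ht₀I.1 (le_of_lt hb'.1), hb'.2⟩
      have hpne : γ b' ≠ m := by
        intro h
        have := geod_inj hγ hb'I ht₀I h
        exact absurd this (ne_of_gt hb'.1)
      obtain ⟨hdd, hδ, himδ⟩ := subrev_geod' hγ ht₀I hb'I (le_of_lt hb'.1) rfl rfl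
      refine ⟨hpne, _, hδ, ?_, ?_⟩
      · intro s hs
        rw [hdd] at hs
        refine Or.inl ⟨b' - s, ⟨by linarith [hs.2], by linarith [hs.1, hb'.2]⟩, rfl⟩
      · rintro R hR hmR ⟨s, hs, hsR⟩ q hqR hqne
        rw [hdd] at hs
        exact Or.inr ⟨hqne, R, hR, hmR, hqR,
          b' - s, ⟨by linarith [hs.2], by linarith [hs.1, hb'.2]⟩, hsR⟩
    · obtain ⟨δ, hδ⟩ := hgeo p m
      have hδP : δ '' Icc (0:ℝ) (dist p m) ⊆ P := geod_in_piece htg hP hpP hmP hδ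
      refine ⟨hpne, δ, hδ, ?_, ?_⟩
      · intro s hs
        have hsne : δ s ≠ m := by
          intro h
          have := geod_inj hδ ⟨hs.1, le_of_lt hs.2⟩ ⟨dist_nonneg, le_refl _⟩
            (by rw [h, geod_end hδ])
          exact absurd this (ne_of_lt hs.2)
        exact Or.inr ⟨hsne, P, hP, hmP, hδP ⟨s, ⟨hs.1, le_of_lt hs.2⟩, rfl⟩, t₂, ht₂, ht₂P⟩
      · rintro R hR hmR ⟨s, hs, hsR⟩ q hqR hqne
        have hsP : δ s ∈ P := hδP ⟨s, ⟨hs.1, le_of_lt hs.2⟩, rfl⟩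
        have hsne : δ s ≠ m := by
          intro h
          have := geod_inj hδ ⟨hs.1, le_of_lt hs.2⟩ ⟨dist_nonneg, le_refl _⟩
            (by rw [h, geod_end hδ])
          exact absurd this (ne_of_lt hs.2)
        by_cases hRP : R = P
        · subst hRP
          exact Or.inr ⟨hqne, R, hR, hmR, hqR, t₂, ht₂, ht₂P⟩
        · exact absurd (htg.t1 R hR P hP hRP ⟨hsR, hsP⟩ ⟨hmR, hmP⟩) hsne
  have hCol : ∀ q, LeftOf 𝒞 γ t₀ q → RightOf 𝒞 γ d t₀ q → False := by
    intro q hqL hqR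
    rcases hqL with ⟨a', ha', hea⟩ | ⟨hqne, P₁, hP₁, hmP₁, hqP₁, t₁, ht₁, ht₁P⟩
    · rcases hqR with ⟨b', hb', heb⟩ | ⟨hqne, P₂, hP₂, hmP₂, hqP₂, t₂, ht₂, ht₂P⟩
      · have ha'I : a' ∈ Icc (0:ℝ) d := ⟨ha'.1, le_trans (le_of_lt ha'.2) ht₀I.2⟩
        have hb'I : b' ∈ Icc (0:ℝ) d := ⟨le_trans ht₀I.1 (le_of_lt hb'.1), hb'.2⟩
        have := geod_inj hγ ha'I hb'I (hea.trans heb.symm)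
        have := ha'.2
        have := hb'.1
        linarith
      · apply hns
        refine ⟨P₂, hP₂, a', t₂, ⟨ha'.1, le_trans (le_of_lt ha'.2) ht₀I.2⟩,
          ⟨le_trans ht₀I.1 (le_of_lt ht₂.1), ht₂.2⟩, ha'.2, ht₂.1, ?_, ht₂P⟩
        rw [hea]
        exact hqP₂
    · rcases hqR with ⟨b', hb', heb⟩ | ⟨hqne2, P₂, hP₂, hmP₂, hqP₂, t₂, ht₂, ht₂P⟩
      · apply hns
        refine ⟨P₁, hP₁, t₁, b', ⟨ht₁.1, le_trans (le_of_lt ht₁.2) ht₀I.2⟩,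
          ⟨le_trans ht₀I.1 (le_of_lt hb'.1), hb'.2⟩, ht₁.2, hb'.1, ht₁P, ?_⟩
        rw [heb]
        exact hqP₁
      · by_cases hPP : P₁ = P₂
        · subst hPP
          apply hns
          exact ⟨P₁, hP₁, t₁, t₂, ⟨ht₁.1, le_trans (le_of_lt ht₁.2) ht₀I.2⟩,
            ⟨le_trans ht₀I.1 (le_of_lt ht₂.1), ht₂.2⟩, ht₁.2, ht₂.1, ht₁P, ht₂P⟩
        · exact hqne (htg.t1 P₁ hP₁ P₂ hP₂ hPP ⟨hqP₁, hqP₂⟩ ⟨hmP₁, hmP₂⟩)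
  intro j p q hpL hqR hch
  exact engine htg hgeo hLspec hRspec hCol j p q hpL hqR hch

theorem sep_endpoints (htg : IsTreeGraded X 𝒞) (hgeo : IsGeodesicSpace X)
    {γ : ℝ → X} {x y : X} (hγ : IsGeodesicFrom γ x y) {t₀ : ℝ}
    (ht₀ : t₀ ∈ Ioo (0:ℝ) (dist x y)) (hns : NoStraddle 𝒞 γ (dist x y) t₀) :
    ∀ j, ¬ AvoidChain (γ t₀) j x y := by
  intro j
  refine sep_general htg hgeo hγ ht₀ hns j x y ?_ ?_
  · exact Or.inl ⟨0, ⟨le_refl _, ht₀.1⟩, geod_start hγ⟩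
  · exact Or.inl ⟨dist x y, ⟨ht₀.2, le_refl _⟩, geod_end hγ⟩

theorem sep_junction (htg : IsTreeGraded X 𝒞) (hgeo : IsGeodesicSpace X)
    {Q₁ Q₂ : Set X} (h1 : Q₁ ∈ 𝒞) (h2 : Q₂ ∈ 𝒞) (hQne : Q₁ ≠ Q₂) {w : X}
    (hw1 : w ∈ Q₁) (hw2 : w ∈ Q₂) :
    ∀ j p q, p ∈ Q₁ → p ≠ w → q ∈ Q₂ → q ≠ w → ¬ AvoidChain w j p q := by
  have hspec : ∀ (Q : Set X), Q ∈ 𝒞 → w ∈ Q → SideSpec 𝒞 w (fun p => p ∈ Q ∧ p ≠ w) := by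
    intro Q hQ hwQ p hp
    obtain ⟨δ, hδ⟩ := hgeo p w
    have hδQ : δ '' Icc (0:ℝ) (dist p w) ⊆ Q := geod_in_piece htg hQ hp.1 hwQ hδ
    refine ⟨hp.2, δ, hδ, ?_, ?_⟩
    · intro s hs
      refine ⟨hδQ ⟨s, ⟨hs.1, le_of_lt hs.2⟩, rfl⟩, ?_⟩
      intro h
      have := geod_inj hδ ⟨hs.1, le_of_lt hs.2⟩ ⟨dist_nonneg, le_refl _⟩
        (by rw [h, geod_end hδ])
      exact absurd this (ne_of_lt hs.2)
    · rintro R hR hwR ⟨s, hs, hsR⟩ q hqR hqne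
      have hsQ : δ s ∈ Q := hδQ ⟨s, ⟨hs.1, le_of_lt hs.2⟩, rfl⟩
      have hsne : δ s ≠ w := by
        intro h
        have := geod_inj hδ ⟨hs.1, le_of_lt hs.2⟩ ⟨dist_nonneg, le_refl _⟩
          (by rw [h, geod_end hδ])
        exact absurd this (ne_of_lt hs.2)
      by_cases hRQ : R = Q
      · subst hRQ
        exact ⟨hqR, hqne⟩
      · exact absurd (htg.t1 R hR Q hQ hRQ ⟨hsR, hsQ⟩ ⟨hwR, hwQ⟩) hsne
  have hCol : ∀ q, (q ∈ Q₁ ∧ q ≠ w) → (q ∈ Q₂ ∧ q ≠ w) → False := by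
    intro q hq1 hq2
    exact hq1.2 (htg.t1 Q₁ h1 Q₂ h2 hQne ⟨hq1.1, hq2.1⟩ ⟨hw1, hw2⟩)
  intro j p q hp hpw hq hqw hch
  exact engine htg hgeo (hspec Q₁ h1 hw1) (hspec Q₂ h2 hw2) hCol j p q ⟨hp, hpw⟩ ⟨hq, hqw⟩ hch

theorem ladder_unbounded {g : X ≃ᵢ X}
    (hbdd : ∀ p : X, Bornology.IsBounded (Set.range fun k : ℤ => (g ^ k) p))
    (w : X) {e : ℝ} (he : 0 < e) (hlad : ∀ k : ℕ, dist w ((g ^ k) w) = k * e) : False := by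
  obtain ⟨C, hC⟩ := Metric.isBounded_iff.mp (hbdd w)
  obtain ⟨k, hk⟩ := exists_nat_gt (C / e)
  have h1 : w ∈ Set.range fun k : ℤ => (g ^ k) w := ⟨0, by simp⟩
  have h2 : (g ^ k) w ∈ Set.range fun k : ℤ => (g ^ k) w := by
    refine ⟨(k : ℤ), ?_⟩
    simp [zpow_natCast]
  have := hC h1 h2
  rw [hlad k] at this
  have : (k : ℝ) ≤ C / e := by
    rw [le_div_iff₀ he]
    exact this
  linarith

theorem dist_pow_eq (g : X ≃ᵢ X) (k : ℕ) (p q : X) :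
    dist ((g ^ k) p) ((g ^ k) q) = dist p q := (g ^ k).isometry.dist_eq p q

theorem pow_apply_succ (g : X ≃ᵢ X) (k : ℕ) (p : X) :
    (g ^ (k + 1)) p = (g ^ k) (g p) := by rw [pow_succ]; rfl

theorem pow_apply_succ' (g : X ≃ᵢ X) (k : ℕ) (p : X) :
    (g ^ (k + 1)) p = g ((g ^ k) p) := by rw [pow_succ']; rfl

theorem pow_symm_apply (g : X ≃ᵢ X) (k : ℕ) (p : X) :
    ((g ^ k).symm) ((g ^ k) p) = p := (g ^ k).symm_apply_apply p

end TGaux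

namespace TGaux

open Set

variable {X : Type*} [MetricSpace X] {𝒞 : Set (Set X)}

theorem midpoint_fixed (htg : IsTreeGraded X 𝒞) (hgeo : IsGeodesicSpace X) (g : X ≃ᵢ X)
    (hbdd : ∀ p : X, Bornology.IsBounded (Set.range fun k : ℤ => (g ^ k) p))
    {x : X} (hx : g x ≠ x) {m : X} (hm : IsMiddleCutPoint 𝒞 x (g x) m) : g m = m := by
  rcases hm with ⟨hxy, _⟩ | ⟨hne, γ, hγ, hmcut, hdxm, hdym⟩
  · exact absurd hxy.symm hx
  have hd0 : 0 < dist x (g x) := dist_pos.mpr hne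
  have hγmid : γ (dist x (g x) / 2) = m := by
    obtain ⟨t, htI, hγt, _⟩ := hmcut
    have := geod_dist_start hγ htI
    rw [hγt] at this
    rw [show dist x (g x) / 2 = t by rw [← this, hdxm], hγt]
  have ht₀ : dist x (g x) / 2 ∈ Ioo (0:ℝ) (dist x (g x)) := ⟨by linarith, by linarith⟩
  have hmid_mem : dist x (g x) / 2 ∈ Icc (0:ℝ) (dist x (g x)) :=
    ⟨le_of_lt ht₀.1, le_of_lt ht₀.2⟩
  have hns : NoStraddle 𝒞 γ (dist x (g x)) (dist x (g x) / 2) :=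
    cutp_noStraddle htg hγ hmcut hmid_mem hγmid
  have hsep : ∀ j, ¬ AvoidChain m j x (g x) := by
    have := sep_endpoints htg hgeo hγ ht₀ hns
    rwa [hγmid] at this
  by_contra hgm
  have he : 0 < dist m (g m) := dist_pos.mpr (Ne.symm hgm)
  set e := dist m (g m) with hedef
  have hclaim : ∀ k : ℕ, dist m ((g ^ k) m) = k * e := by
    intro k
    induction k using Nat.strong_induction_on with
    | _ k ih =>
    match k with
    | 0 => simp
    | 1 => simp [pow_one, hedef]
    | (k + 2) =>
      have hdK : dist m ((g ^ (k+1)) m) = ((k:ℝ)+1) * e := by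
        have := ih (k+1) (by omega)
        push_cast at this
        exact this
      have hdk : dist m ((g ^ k) m) = k * e := ih k (by omega)
      obtain ⟨σ, hσ⟩ := hgeo m ((g ^ (k+2)) m)
      by_cases hmem : (g ^ (k+1)) m ∈ σ '' Icc (0:ℝ) (dist m ((g ^ (k+2)) m))
      · have hadd := point_on_geod_add hσ hmem
        have hstep : dist ((g ^ (k+1)) m) ((g ^ (k+2)) m) = e := by
          rw [show (g ^ (k+2)) m = (g ^ (k+1)) (g m) from pow_apply_succ g (k+1) m]
          exact dist_pow_eq g (k+1) m (g m)
        rw [hdK, hstep] at hadd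
        rw [← hadd]
        push_cast
        ring
      · exfalso
        -- build a 3-chain from (g^(k+1)) x to (g^(k+1)) (g x) avoiding (g^(k+1)) m
        set K := k + 1 with hK
        have hl1 : ∃ ν : ℝ → X, IsGeodesicFrom ν ((g ^ K) x) m ∧
            (g ^ K) m ∉ ν '' Icc (0:ℝ) (dist ((g ^ K) x) m) := by
          apply link_avoids hgeo
          have h1 : dist ((g ^ K) x) ((g ^ K) m) = dist x m := dist_pow_eq g K x m
          have h2 : dist ((g ^ K) m) m = ((k:ℝ)+1) * e := by rw [dist_comm]; exact hdK
          have h3 : dist ((g ^ K) x) m ≤ dist x m + k * e := by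
            calc dist ((g ^ K) x) m ≤ dist ((g ^ K) x) ((g ^ k) m) + dist ((g ^ k) m) m :=
              dist_triangle _ _ _
            _ = dist x m + k * e := by
                rw [show (g ^ K) x = (g ^ k) (g x) from pow_apply_succ g k x,
                  dist_pow_eq g k (g x) m, dist_comm ((g ^ k) m) m, hdk, hdym, ← hdxm]
          intro hcontra
          rw [h1, h2] at hcontra
          linarith
        have hl3 : ∃ ν : ℝ → X, IsGeodesicFrom ν ((g ^ (k+2)) m) ((g ^ K) (g x)) ∧
            (g ^ K) m ∉ ν '' Icc (0:ℝ) (dist ((g ^ (k+2)) m) ((g ^ K) (g x))) := by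
          apply link_avoids hgeo
          have h1 : dist ((g ^ (k+2)) m) ((g ^ K) m) = e := by
            rw [show (g ^ (k+2)) m = (g ^ K) (g m) from pow_apply_succ g K m,
              dist_pow_eq, dist_comm]
          have h2 : dist ((g ^ K) m) ((g ^ K) (g x)) = dist m (g x) := dist_pow_eq g K m (g x)
          have h3 : dist ((g ^ (k+2)) m) ((g ^ K) (g x)) = dist m x := by
            rw [show (g ^ (k+2)) m = (g ^ K) (g m) from pow_apply_succ g K m,
              dist_pow_eq]
            exact (g.isometry.dist_eq m x)
          rw [h1, h2, h3, dist_comm m (g x), hdym, dist_comm m x, hdxm]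
          intro hcontra
          linarith
        obtain ⟨ν₁, hν₁, hν₁a⟩ := hl1
        obtain ⟨ν₃, hν₃, hν₃a⟩ := hl3
        have hchain : AvoidChain ((g ^ K) m) 3 ((g ^ K) x) ((g ^ K) (g x)) := by
          refine ⟨m, ν₁, hν₁, hν₁a, ?_⟩
          refine ⟨(g ^ (k+2)) m, σ, hσ, hmem, ?_⟩
          exact ⟨(g ^ K) (g x), ν₃, hν₃, hν₃a, rfl⟩
        have ht := hchain.transport (g ^ K).symm
        simp only [pow_symm_apply] at ht
        exact hsep 3 ht
  exact ladder_unbounded hbdd m he hclaim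

end TGaux

namespace TGaux

open Set

variable {X : Type*} [MetricSpace X] {𝒞 : Set (Set X)}

theorem dist_pow_le (g : X ≃ᵢ X) {i j : ℕ} (h : i ≤ j) (w : X) :
    dist ((g ^ i) w) ((g ^ j) w) = dist w ((g ^ (j - i)) w) := by
  have : (g ^ j) w = (g ^ i) ((g ^ (j - i)) w) := by
    rw [show (g:X ≃ᵢ X) ^ j = g ^ (i + (j - i)) by rw [Nat.add_sub_cancel' h], pow_add]
    rfl
  rw [this, dist_pow_eq]

theorem pow_image_succ (g : X ≃ᵢ X) (k : ℕ) (S : Set X) :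
    (g ^ (k + 1)) '' S = (g ^ k) '' (g '' S) := by
  ext z
  constructor
  · rintro ⟨w, hw, rfl⟩
    exact ⟨g w, ⟨w, hw, rfl⟩, (pow_apply_succ g k w).symm⟩
  · rintro ⟨w', ⟨w, hw, rfl⟩, rfl⟩
    exact ⟨w, hw, pow_apply_succ g k w⟩

theorem pow_image_mem_piece (g : X ≃ᵢ X) (hperm : ∀ P ∈ 𝒞, g '' P ∈ 𝒞) {Q : Set X}
    (hQ : Q ∈ 𝒞) : ∀ k : ℕ, (g ^ k) '' Q ∈ 𝒞 := by
  intro k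
  induction k with
  | zero => simpa using hQ
  | succ k ih =>
    have h1 : (g ^ (k + 1)) '' Q = g '' ((g ^ k) '' Q) := by
      ext z
      constructor
      · rintro ⟨w, hw, rfl⟩
        exact ⟨(g ^ k) w, ⟨w, hw, rfl⟩, (pow_apply_succ' g k w).symm⟩
      · rintro ⟨w', ⟨w, hw, rfl⟩, rfl⟩
        exact ⟨w, hw, pow_apply_succ' g k w⟩
    rw [h1]
    exact hperm _ ih

theorem pow_image_ne (g : X ≃ᵢ X) {Q : Set X} (hH1 : g '' Q ≠ Q) (k : ℕ) :
    (g ^ k) '' Q ≠ (g ^ (k + 1)) '' Q := by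
  intro h
  apply hH1
  rw [pow_image_succ] at h
  exact (Set.image_eq_image (g ^ k).injective).mp h.symm

/-- growth along a sequence of junction points between consecutive pieces `(g^k) '' Q` -/
theorem junction_growth (htg : IsTreeGraded X 𝒞) (hgeo : IsGeodesicSpace X) (g : X ≃ᵢ X)
    (hperm : ∀ P ∈ 𝒞, g '' P ∈ 𝒞)
    (hbdd : ∀ p : X, Bornology.IsBounded (Set.range fun k : ℤ => (g ^ k) p))
    {Q : Set X} (hQ : Q ∈ 𝒞) (hH1 : g '' Q ≠ Q) {w : X} (hwQ : w ∈ Q)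
    (hwgQ : w ∈ g '' Q) (hwne : w ≠ g w) : False := by
  have he : 0 < dist w (g w) := dist_pos.mpr hwne
  set e := dist w (g w) with hedef
  have hstep : ∀ i : ℕ, dist ((g ^ i) w) ((g ^ (i + 1)) w) = e := by
    intro i
    rw [pow_apply_succ g i w, dist_pow_eq]
  have hlad : ∀ k : ℕ, dist w ((g ^ k) w) = k * e := by
    intro k
    induction k using Nat.strong_induction_on with
    | _ k ih =>
    match k with
    | 0 => simp
    | 1 => simp [pow_one, hedef]
    | (k + 2) =>
      have hdK : dist w ((g ^ (k+1)) w) = ((k:ℝ)+1) * e := by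
        have := ih (k+1) (by omega)
        push_cast at this
        exact this
      obtain ⟨σ, hσ⟩ := hgeo w ((g ^ (k+2)) w)
      by_cases hmem : (g ^ (k+1)) w ∈ σ '' Icc (0:ℝ) (dist w ((g ^ (k+2)) w))
      · have hadd := point_on_geod_add hσ hmem
        rw [hdK, hstep (k+1)] at hadd
        rw [← hadd]
        push_cast
        ring
      · exfalso
        -- ladder chain from (g^k) w down to w, then σ to (g^(k+2)) w
        have hdists : ∀ i j : ℕ, i ≤ j → j ≤ k + 1 →
            dist ((g ^ i) w) ((g ^ j) w) = ((j - i : ℕ) : ℝ) * e := by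
          intro i j hij hjk
          rw [dist_pow_le g hij w]
          rcases Nat.lt_or_ge (j - i) (k + 2) with h | h
          · exact ih (j - i) h
          · omega
        have hlchain : ∀ i : ℕ, i ≤ k →
            AvoidChain ((g ^ (k+1)) w) i ((g ^ k) w) ((g ^ (k - i)) w) := by
          intro i
          induction i with
          | zero => intro _; rfl
          | succ i ihc =>
            intro hik
            have hchain := ihc (by omega)
            have hlink : ∃ ν : ℝ → X, IsGeodesicFrom ν ((g ^ (k - i)) w) ((g ^ (k - (i+1))) w) ∧
                (g ^ (k+1)) w ∉ ν '' Icc (0:ℝ) (dist ((g ^ (k - i)) w) ((g ^ (k - (i+1))) w)) := by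
              apply link_avoids hgeo
              have h1 : dist ((g ^ (k - i)) w) ((g ^ (k+1)) w) = ((i + 1 : ℕ) : ℝ) * e := by
                have := hdists (k - i) (k+1) (by omega) (le_refl _)
                rwa [show (k+1) - (k - i) = i + 1 from by omega] at this
              have h2 : dist ((g ^ (k+1)) w) ((g ^ (k - (i+1))) w) = ((i + 2 : ℕ) : ℝ) * e := by
                rw [dist_comm]
                have := hdists (k - (i+1)) (k+1) (by omega) (le_refl _)
                rwa [show (k+1) - (k - (i+1)) = i + 2 from by omega] at this
              have h3 : dist ((g ^ (k - i)) w) ((g ^ (k - (i+1))) w) = e := by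
                rw [dist_comm]
                have h4 : k - i = (k - (i+1)) + 1 := by omega
                rw [h4]
                exact hstep (k - (i+1))
              rw [h1, h2, h3]
              intro hcontra
              have hge : (0:ℝ) ≤ (i:ℝ) := Nat.cast_nonneg i
              push_cast at hcontra
              nlinarith [he]
            obtain ⟨ν, hν, hνa⟩ := hlink
            exact hchain.append (AvoidChain.single hν hνa)
        have hchain0 := hlchain k (le_refl _)
        rw [Nat.sub_self] at hchain0
        have hσa : AvoidChain ((g ^ (k+1)) w) 1 ((g ^ 0) w) ((g ^ (k+2)) w) := by
          refine AvoidChain.single (by simpa using hσ) ?_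
          simpa using hmem
        have hbig := hchain0.append hσa
        -- contradiction with junction separation
        have hQK : (g ^ (k+1)) '' Q ∈ 𝒞 := pow_image_mem_piece g hperm hQ (k+1)
        have hQK1 : (g ^ (k+2)) '' Q ∈ 𝒞 := pow_image_mem_piece g hperm hQ (k+2)
        have hQKne : (g ^ (k+1)) '' Q ≠ (g ^ (k+2)) '' Q := pow_image_ne g hH1 (k+1)
        have hwK1 : (g ^ (k+1)) w ∈ (g ^ (k+1)) '' Q := ⟨w, hwQ, rfl⟩
        have hwK2 : (g ^ (k+1)) w ∈ (g ^ (k+2)) '' Q := by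
          obtain ⟨w', hw', hww⟩ := hwgQ
          refine ⟨w', hw', ?_⟩
          rw [pow_apply_succ g (k+1) w', hww]
        have hp : (g ^ k) w ∈ (g ^ (k+1)) '' Q := by
          obtain ⟨w', hw', hww⟩ := hwgQ
          refine ⟨w', hw', ?_⟩
          rw [pow_apply_succ g k w', hww]
        have hpne : (g ^ k) w ≠ (g ^ (k+1)) w := by
          intro h
          have : dist ((g ^ k) w) ((g ^ (k+1)) w) = 0 := by rw [h, dist_self]
          rw [hstep k] at this
          linarith
        have hq : (g ^ (k+2)) w ∈ (g ^ (k+2)) '' Q := ⟨w, hwQ, rfl⟩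
        have hqne : (g ^ (k+2)) w ≠ (g ^ (k+1)) w := by
          intro h
          have : dist ((g ^ (k+1)) w) ((g ^ (k+2)) w) = 0 := by rw [h, dist_self]
          rw [hstep (k+1)] at this
          linarith
        have := sep_junction htg hgeo hQK hQK1 hQKne hwK1 hwK2 (k + 1)
          ((g ^ k) w) ((g ^ (k+2)) w) hp hpne hq hqne
        exact this hbig
  exact ladder_unbounded hbdd w he hlad

end TGaux

namespace TGaux

open Set

variable {X : Type*} [MetricSpace X] {𝒞 : Set (Set X)}

theorem comp_geod_image {τ : ℝ → X} {u v : X} (h : IsGeodesicFrom τ u v) (g' : X ≃ᵢ X) :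
    ∃ ν : ℝ → X, IsGeodesicFrom ν (g' u) (g' v) ∧
      ν '' Icc (0:ℝ) (dist (g' u) (g' v)) = g' '' (τ '' Icc (0:ℝ) (dist u v)) := by
  obtain ⟨hg, him⟩ := comp_geod h g'
  refine ⟨_, hg, ?_⟩
  rw [show dist (g' u) (g' v) = dist u v from g'.isometry.dist_eq u v]
  exact him _

theorem ladder_chain (hgeo : IsGeodesicSpace X) (g : X ≃ᵢ X) {w : X} {e : ℝ}
    (he : 0 < e) (hstep : ∀ i : ℕ, dist ((g ^ i) w) ((g ^ (i + 1)) w) = e)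
    {k : ℕ} (hdist : ∀ i : ℕ, i ≤ k + 1 → dist w ((g ^ i) w) = i * e) :
    AvoidChain ((g ^ (k + 1)) w) k ((g ^ k) w) w := by
  have hdists : ∀ i j : ℕ, i ≤ j → j ≤ k + 1 →
      dist ((g ^ i) w) ((g ^ j) w) = ((j - i : ℕ) : ℝ) * e := by
    intro i j hij hjk
    rw [dist_pow_le g hij w]
    exact hdist (j - i) (by omega)
  have hlchain : ∀ i : ℕ, i ≤ k →
      AvoidChain ((g ^ (k+1)) w) i ((g ^ k) w) ((g ^ (k - i)) w) := by
    intro i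
    induction i with
    | zero => intro _; rfl
    | succ i ihc =>
      intro hik
      have hchain := ihc (by omega)
      have hlink : ∃ ν : ℝ → X, IsGeodesicFrom ν ((g ^ (k - i)) w) ((g ^ (k - (i+1))) w) ∧
          (g ^ (k+1)) w ∉ ν '' Icc (0:ℝ) (dist ((g ^ (k - i)) w) ((g ^ (k - (i+1))) w)) := by
        apply link_avoids hgeo
        have h1 : dist ((g ^ (k - i)) w) ((g ^ (k+1)) w) = ((i + 1 : ℕ) : ℝ) * e := by
          have := hdists (k - i) (k+1) (by omega) (le_refl _)
          rwa [show (k+1) - (k - i) = i + 1 from by omega] at this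
        have h2 : dist ((g ^ (k+1)) w) ((g ^ (k - (i+1))) w) = ((i + 2 : ℕ) : ℝ) * e := by
          rw [dist_comm]
          have := hdists (k - (i+1)) (k+1) (by omega) (le_refl _)
          rwa [show (k+1) - (k - (i+1)) = i + 2 from by omega] at this
        have h3 : dist ((g ^ (k - i)) w) ((g ^ (k - (i+1))) w) = e := by
          rw [dist_comm]
          have h4 : k - i = (k - (i+1)) + 1 := by omega
          rw [h4]
          exact hstep (k - (i+1))
        rw [h1, h2, h3]
        intro hcontra
        have hge : (0:ℝ) ≤ (i:ℝ) := Nat.cast_nonneg i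
        push_cast at hcontra
        nlinarith [he]
      obtain ⟨ν, hν, hνa⟩ := hlink
      exact hchain.append (AvoidChain.single hν hνa)
  have := hlchain k (le_refl _)
  rw [Nat.sub_self] at this
  simpa using this

/-- Ladder B: if the exit point `γ β` of the middle piece is not on the image geodesic
`g ∘ γ` before parameter `β`, the orbit of `γ β` grows linearly — impossible. -/
theorem grandB (htg : IsTreeGraded X 𝒞) (hgeo : IsGeodesicSpace X) (g : X ≃ᵢ X)
    (hbdd : ∀ p : X, Bornology.IsBounded (Set.range fun k : ℤ => (g ^ k) p))
    {γ : ℝ → X} {x : X} (hγ : IsGeodesicFrom γ x (g x)) {β : ℝ}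
    (hβ1 : dist x (g x) / 2 < β) (hβ2 : β < dist x (g x))
    (hns : NoStraddle 𝒞 γ (dist x (g x)) β) :
    γ β ∈ (fun s => g (γ s)) '' Icc (0:ℝ) β := by
  by_contra hA
  set d := dist x (g x) with hd
  have hd0 : 0 < d := lt_trans (by linarith) hβ2
  have hβI : β ∈ Icc (0:ℝ) d := ⟨by linarith, le_of_lt hβ2⟩
  have hdb : dist x (γ β) = β := geod_dist_start hγ hβI
  have hdbe : dist (γ β) (g x) = d - β := geod_dist_end hγ hβI
  have hbne : γ β ≠ g (γ β) := by
    intro h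
    have h1 : dist (g x) (g (γ β)) = β := by rw [g.isometry.dist_eq, hdb]
    have h2 : dist (g x) (γ β) = d - β := by rw [dist_comm]; exact hdbe
    rw [← h] at h1
    rw [h1] at h2
    linarith
  have he : 0 < dist (γ β) (g (γ β)) := dist_pos.mpr hbne
  set e := dist (γ β) (g (γ β)) with hedef
  set b := γ β with hb
  have hstep : ∀ i : ℕ, dist ((g ^ i) b) ((g ^ (i + 1)) b) = e := by
    intro i
    rw [pow_apply_succ g i b, dist_pow_eq]
  have hsep : ∀ j, ¬ AvoidChain b j x (g x) :=
    sep_endpoints htg hgeo hγ ⟨by linarith, hβ2⟩ hns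
  have hlad : ∀ k : ℕ, dist b ((g ^ k) b) = k * e := by
    intro k
    induction k using Nat.strong_induction_on with
    | _ k ih =>
    match k with
    | 0 => simp
    | 1 => simp [pow_one, hedef]
    | (k + 2) =>
      have hdK : dist b ((g ^ (k+1)) b) = ((k:ℝ)+1) * e := by
        have := ih (k+1) (by omega)
        push_cast at this
        exact this
      obtain ⟨σ, hσ⟩ := hgeo b ((g ^ (k+2)) b)
      by_cases hmem : (g ^ (k+1)) b ∈ σ '' Icc (0:ℝ) (dist b ((g ^ (k+2)) b))
      · have hadd := point_on_geod_add hσ hmem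
        rw [hdK, hstep (k+1)] at hadd
        rw [← hadd]
        push_cast
        ring
      · exfalso
        -- L1 : (g^(k+1)) x → (g^k) b
        have hL1 : ∃ ν : ℝ → X, IsGeodesicFrom ν ((g ^ (k+1)) x) ((g ^ k) b) ∧
            (g ^ (k+1)) b ∉ ν '' Icc (0:ℝ) (dist ((g ^ (k+1)) x) ((g ^ k) b)) := by
          apply link_avoids hgeo
          have h1 : dist ((g ^ (k+1)) x) ((g ^ k) b) = d - β := by
            rw [pow_apply_succ g k x, dist_pow_eq, dist_comm]
            exact hdbe
          have h2 : dist ((g ^ (k+1)) x) ((g ^ (k+1)) b) = β := by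
            rw [dist_pow_eq]
            exact hdb
          have h3 : dist ((g ^ (k+1)) b) ((g ^ k) b) = e := by
            rw [dist_comm]
            exact hstep k
          rw [h1, h2, h3]
          intro hcontra
          linarith
        obtain ⟨ν₁, hν₁, hν₁a⟩ := hL1
        -- ladder from (g^k) b down to b
        have hladder : AvoidChain ((g ^ (k+1)) b) k ((g ^ k) b) b :=
          ladder_chain hgeo g he hstep (fun i hi => ih i (by omega))
        -- σ : b → (g^(k+2)) b
        have hσc : AvoidChain ((g ^ (k+1)) b) 1 b ((g ^ (k+2)) b) :=
          AvoidChain.single hσ hmem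
        -- L4 : (g^(k+2)) b → (g^(k+2)) x
        obtain ⟨hdτ, hτ, himτ⟩ := subrev_geod' hγ ⟨le_refl _, by linarith⟩ hβI hβI.1
          rfl (geod_start hγ)
        obtain ⟨ν₄, hν₄, hν₄im⟩ := comp_geod_image hτ (g ^ (k+2))
        rw [himτ] at hν₄im
        have hL4 : (g ^ (k+1)) b ∉ ν₄ ''
            Icc (0:ℝ) (dist ((g ^ (k+2)) (γ β)) ((g ^ (k+2)) x)) := by
          intro hmem4
          rw [hν₄im] at hmem4
          obtain ⟨z, hz, heq⟩ := hmem4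
          have heq2 : (g ^ (k+1)) (g z) = (g ^ (k+1)) b := by
            rw [← pow_apply_succ g (k+1) z, heq]
          have hgz : g z = b := (g ^ (k+1)).injective heq2
          apply hA
          obtain ⟨r, hr, rfl⟩ := hz
          exact ⟨r, hr, hgz⟩
        have hL4c : AvoidChain ((g ^ (k+1)) b) 1 ((g ^ (k+2)) (γ β)) ((g ^ (k+2)) x) :=
          AvoidChain.single hν₄ hL4
        -- assemble and transport
        have hfull : AvoidChain ((g ^ (k+1)) b) (k + 3) ((g ^ (k+1)) x) ((g ^ (k+2)) x) := by
          have c1 : AvoidChain ((g ^ (k+1)) b) 1 ((g ^ (k+1)) x) ((g ^ k) b) :=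
            AvoidChain.single hν₁ hν₁a
          have c2 := (c1.append hladder).append hσc
          have c3 := c2.append hL4c
          have harith : 1 + k + 1 + 1 = k + 3 := by omega
          rwa [harith] at c3
        have hx2 : (g ^ (k+2)) x = (g ^ (k+1)) (g x) := pow_apply_succ g (k+1) x
        rw [hx2] at hfull
        have ht := hfull.transport (g ^ (k+1)).symm
        simp only [pow_symm_apply] at ht
        exact hsep (k+3) ht
  exact ladder_unbounded hbdd b he hlad

end TGaux

namespace TGaux

open Set

variable {X : Type*} [MetricSpace X] {𝒞 : Set (Set X)}

/-- Ladder A: mirror of `grandB` for the entry point `γ α`. -/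
theorem grandA (htg : IsTreeGraded X 𝒞) (hgeo : IsGeodesicSpace X) (g : X ≃ᵢ X)
    (hbdd : ∀ p : X, Bornology.IsBounded (Set.range fun k : ℤ => (g ^ k) p))
    {γ : ℝ → X} {x : X} (hγ : IsGeodesicFrom γ x (g x)) {α : ℝ}
    (hα1 : 0 < α) (hα2 : α < dist x (g x) / 2)
    (hns : NoStraddle 𝒞 γ (dist x (g x)) α) :
    g (γ α) ∈ γ '' Icc α (dist x (g x)) := by
  by_contra hV
  set d := dist x (g x) with hd
  have hd0 : 0 < d := by linarith
  have hαI : α ∈ Icc (0:ℝ) d := ⟨le_of_lt hα1, by linarith⟩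
  have hdI : d ∈ Icc (0:ℝ) d := ⟨dist_nonneg, le_refl _⟩
  have hda : dist x (γ α) = α := geod_dist_start hγ hαI
  have hdae : dist (γ α) (g x) = d - α := geod_dist_end hγ hαI
  set a := γ α with ha
  have hane : a ≠ g a := by
    intro h
    have h1 : dist (g x) (g a) = α := by rw [g.isometry.dist_eq, ha, hda]
    have h2 : dist (g x) a = d - α := by rw [dist_comm, ha, hdae]
    rw [← h] at h1
    rw [h1] at h2
    linarith
  have he : 0 < dist a (g a) := dist_pos.mpr hane
  set e := dist a (g a) with hedef
  have hstep : ∀ i : ℕ, dist ((g ^ i) a) ((g ^ (i + 1)) a) = e := by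
    intro i
    rw [pow_apply_succ g i a, dist_pow_eq]
  have hsep : ∀ j, ¬ AvoidChain a j x (g x) :=
    sep_endpoints htg hgeo hγ ⟨hα1, by linarith⟩ hns
  have hlad : ∀ k : ℕ, dist a ((g ^ k) a) = k * e := by
    intro k
    induction k using Nat.strong_induction_on with
    | _ k ih =>
    match k with
    | 0 => simp
    | 1 => simp [pow_one, hedef]
    | (k + 2) =>
      have hdK : dist a ((g ^ (k+1)) a) = ((k:ℝ)+1) * e := by
        have := ih (k+1) (by omega)
        push_cast at this
        exact this
      obtain ⟨σ, hσ⟩ := hgeo a ((g ^ (k+2)) a)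
      by_cases hmem : (g ^ (k+1)) a ∈ σ '' Icc (0:ℝ) (dist a ((g ^ (k+2)) a))
      · have hadd := point_on_geod_add hσ hmem
        rw [hdK, hstep (k+1)] at hadd
        rw [← hadd]
        push_cast
        ring
      · exfalso
        -- M1 : (g^(k+1)) (g x) → (g^(k+2)) a
        have hM1 : ∃ ν : ℝ → X, IsGeodesicFrom ν ((g ^ (k+1)) (g x)) ((g ^ (k+2)) a) ∧
            (g ^ (k+1)) a ∉ ν '' Icc (0:ℝ) (dist ((g ^ (k+1)) (g x)) ((g ^ (k+2)) a)) := by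
          apply link_avoids hgeo
          have h1 : dist ((g ^ (k+1)) (g x)) ((g ^ (k+2)) a) = α := by
            rw [show (g ^ (k+2)) a = (g ^ (k+1)) (g a) from pow_apply_succ g (k+1) a,
              dist_pow_eq, g.isometry.dist_eq, ha, hda]
          have h2 : dist ((g ^ (k+1)) (g x)) ((g ^ (k+1)) a) = d - α := by
            rw [dist_pow_eq, dist_comm, ha, hdae]
          have h3 : dist ((g ^ (k+1)) a) ((g ^ (k+2)) a) = e := hstep (k+1)
          rw [h1, h2, h3]
          intro hcontra
          linarith
        obtain ⟨ν₁, hν₁, hν₁a⟩ := hM1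
        -- M2 : (g^(k+2)) a → a via σ reversed
        obtain ⟨hσr, hσrim⟩ := rev_geod hσ
        have hM2a : (g ^ (k+1)) a ∉ (fun s => σ (dist a ((g ^ (k+2)) a) - s)) ''
            Icc (0:ℝ) (dist ((g ^ (k+2)) a) a) := by
          rw [hσrim]
          exact hmem
        -- M3 : ladder from a up to (g^k) a (by reversing the descending ladder)
        have hladder : AvoidChain ((g ^ (k+1)) a) k a ((g ^ k) a) :=
          (ladder_chain hgeo g he hstep (fun i hi => ih i (by omega))).symm
        -- M4 : (g^k) a → (g^k) (g x)
        obtain ⟨hdτ, hτ, himτ⟩ := sub_geod' hγ hαI hdI hαI.2 rfl (geod_end hγ)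
        obtain ⟨ν₄, hν₄, hν₄im⟩ := comp_geod_image hτ (g ^ k)
        rw [himτ] at hν₄im
        have hM4 : (g ^ (k+1)) a ∉ ν₄ ''
            Icc (0:ℝ) (dist ((g ^ k) (γ α)) ((g ^ k) (g x))) := by
          intro hmem4
          rw [hν₄im] at hmem4
          obtain ⟨z, hz, heq⟩ := hmem4
          have heq2 : (g ^ k) z = (g ^ k) (g a) := by
            rw [heq, pow_apply_succ g k a]
          have hgz : z = g a := (g ^ k).injective heq2
          apply hV
          rw [← hgz]
          exact hz
        -- assemble
        have hfull : AvoidChain ((g ^ (k+1)) a) (k + 3)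
            ((g ^ (k+1)) (g x)) ((g ^ k) (g x)) := by
          have c1 : AvoidChain ((g ^ (k+1)) a) 1 ((g ^ (k+1)) (g x)) ((g ^ (k+2)) a) :=
            AvoidChain.single hν₁ hν₁a
          have c2 : AvoidChain ((g ^ (k+1)) a) 1 ((g ^ (k+2)) a) a :=
            AvoidChain.single hσr hM2a
          have c4 : AvoidChain ((g ^ (k+1)) a) 1 ((g ^ k) (γ α)) ((g ^ k) (g x)) :=
            AvoidChain.single hν₄ hM4
          have call := ((c1.append c2).append hladder).append c4
          have harith : 1 + 1 + k + 1 = k + 3 := by omega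
          rwa [harith] at call
        have hx2 : (g ^ k) (g x) = (g ^ (k+1)) x := (pow_apply_succ g k x).symm
        rw [hx2] at hfull
        have hsymm := hfull.symm
        have ht := hsymm.transport (g ^ (k+1)).symm
        simp only [pow_symm_apply] at ht
        exact hsep (k+3) ht
  exact ladder_unbounded hbdd a he hlad

end TGaux

namespace TGaux

open Set

variable {X : Type*} [MetricSpace X] {𝒞 : Set (Set X)}

theorem midpiece_fixed (htg : IsTreeGraded X 𝒞) (hgeo : IsGeodesicSpace X) (g : X ≃ᵢ X)
    (hperm : ∀ P ∈ 𝒞, g '' P ∈ 𝒞)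
    (hbdd : ∀ p : X, Bornology.IsBounded (Set.range fun k : ℤ => (g ^ k) p))
    {x : X} {Q : Set X} (hQ : IsMiddleCutPiece 𝒞 x (g x) Q) : g '' Q = Q := by
  obtain ⟨hne, hQ𝒞, γ, hγ, hNoMid, a, haCut, b, hbCut, haQ, hbQ, hax, -, hby, -⟩ := hQ
  have hd0 : 0 < dist x (g x) := dist_pos.mpr hne
  set d := dist x (g x) with hd
  -- parameters of a and b
  have haCut' := haCut
  have hbCut' := hbCut
  obtain ⟨ta, htaI, hγta, -⟩ := haCut'
  obtain ⟨tb, htbI, hγtb, -⟩ := hbCut'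
  have hta_val : ta = dist x a := by rw [← hγta]; exact (geod_dist_start hγ htaI).symm
  have htb_val : dist (g x) b = d - tb := by
    rw [← hγtb, dist_comm]
    exact geod_dist_end hγ htbI
  have hta_lt : ta < d / 2 := by
    have hta_le : ta ≤ d / 2 := by rw [hta_val]; exact hax
    rcases lt_or_eq_of_le hta_le with h | h
    · exact h
    · exfalso
      apply hNoMid a haCut
      have h2 : dist (g x) a = d - ta := by
        rw [← hγta, dist_comm]
        exact geod_dist_end hγ htaI
      rw [← hta_val, h, h2, h]
      ring
  have htb_gt : d / 2 < tb := by
    have htb_le : d - tb ≤ d / 2 := by rw [← htb_val]; exact hby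
    rcases lt_or_eq_of_le (by linarith : d / 2 ≤ tb) with h | h
    · exact h
    · exfalso
      apply hNoMid b hbCut
      have h1 : dist x b = tb := by rw [← hγtb]; exact geod_dist_start hγ htbI
      rw [h1, htb_val, ← h]
      ring
  -- the trace of Q on γ
  set S := {r | r ∈ Icc (0:ℝ) d ∧ γ r ∈ Q} with hS
  have hSclosed : IsClosed S := hit_closed hγ (htg.closed Q hQ𝒞)
  have hSne : S.Nonempty := ⟨ta, htaI, by rw [hγta]; exact haQ⟩
  have hSbddA : BddAbove S := ⟨d, fun r hr => hr.1.2⟩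
  have hSbddB : BddBelow S := ⟨0, fun r hr => hr.1.1⟩
  have hαmem : sInf S ∈ S := hSclosed.csInf_mem hSne hSbddB
  have hβmem : sSup S ∈ S := hSclosed.csSup_mem hSne hSbddA
  set α := sInf S with hα
  set β := sSup S with hβ
  have hαI : α ∈ Icc (0:ℝ) d := hαmem.1
  have hβI : β ∈ Icc (0:ℝ) d := hβmem.1
  have hα_le : α ≤ ta := csInf_le hSbddB ⟨htaI, by rw [hγta]; exact haQ⟩
  have hβ_ge : tb ≤ β := le_csSup hSbddA ⟨htbI, by rw [hγtb]; exact hbQ⟩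
  have hα_lt : α < d / 2 := lt_of_le_of_lt hα_le hta_lt
  have hβ_gt : d / 2 < β := lt_of_lt_of_le htb_gt hβ_ge
  have hαβ : α < β := lt_trans hα_lt hβ_gt
  have hconv : ∀ r, α ≤ r → r ≤ β → γ r ∈ Q := by
    intro r h1 h2
    exact hit_interval htg hQ𝒞 hγ hαI hβI hαmem.2 hβmem.2 ⟨h1, h2⟩
  -- no piece straddles γ at β (when β is interior) nor at α
  have hnsβ : β < d → NoStraddle 𝒞 γ d β := by
    intro hβd
    rintro ⟨P, hP, s, u, hsI, huI, hsβ, hβu, hsP, huP⟩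
    have hβP : γ β ∈ P := hit_interval htg hP hγ hsI huI hsP huP
      ⟨le_of_lt hsβ, le_of_lt hβu⟩
    have ht'β : max α s < β := max_lt hαβ hsβ
    have ht'P : γ (max α s) ∈ P := hit_interval htg hP hγ hsI huI hsP huP
      ⟨le_max_right α s, le_of_lt (lt_trans ht'β hβu)⟩
    have ht'Q : γ (max α s) ∈ Q := hconv _ (le_max_left α s) (le_of_lt ht'β)
    have ht'I : max α s ∈ Icc (0:ℝ) d :=
      ⟨le_trans hαI.1 (le_max_left α s), le_trans (le_of_lt ht'β) hβI.2⟩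
    have hne' : γ (max α s) ≠ γ β := by
      intro h
      have := geod_inj hγ ht'I hβI h
      linarith
    by_cases hPQ : P = Q
    · subst hPQ
      have : u ≤ β := le_csSup hSbddA ⟨huI, huP⟩
      linarith
    · exact hne' (htg.t1 P hP Q hQ𝒞 hPQ ⟨ht'P, ht'Q⟩ ⟨hβP, hβmem.2⟩)
  have hnsα : 0 < α → NoStraddle 𝒞 γ d α := by
    intro hα0
    rintro ⟨P, hP, s, u, hsI, huI, hsα, hαu, hsP, huP⟩
    have hαP : γ α ∈ P := hit_interval htg hP hγ hsI huI hsP huP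
      ⟨le_of_lt hsα, le_of_lt hαu⟩
    have ht'α : α < min β u := lt_min hαβ hαu
    have ht'P : γ (min β u) ∈ P := hit_interval htg hP hγ hsI huI hsP huP
      ⟨le_of_lt (lt_trans hsα ht'α), min_le_right β u⟩
    have ht'Q : γ (min β u) ∈ Q := hconv _ (le_of_lt ht'α) (min_le_left β u)
    have ht'I : min β u ∈ Icc (0:ℝ) d :=
      ⟨le_trans hαI.1 (le_of_lt ht'α), le_trans (min_le_left β u) hβI.2⟩
    have hne' : γ (min β u) ≠ γ α := by
      intro h
      have := geod_inj hγ ht'I hαI h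
      linarith
    by_cases hPQ : P = Q
    · subst hPQ
      have : α ≤ s := csInf_le hSbddB ⟨hsI, hsP⟩
      linarith
    · exact hne' (htg.t1 P hP Q hQ𝒞 hPQ ⟨ht'P, ht'Q⟩ ⟨hαP, hαmem.2⟩)
  by_contra hH1
  -- three routes, each producing a junction point of Q and g '' Q
  by_cases hβd : β < d
  · by_cases hαdβ : α ≤ d - β
    · -- route via grand ladder B : the junction is γ β
      have hB := grandB htg hgeo g hbdd hγ hβ_gt hβd (hnsβ hβd)
      obtain ⟨s', hs', hs'e0⟩ := hB
      have hs'e : g (γ s') = γ β := hs'e0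
      have hs'I : s' ∈ Icc (0:ℝ) d := ⟨hs'.1, le_trans hs'.2 hβI.2⟩
      have h1 : dist (g x) (g (γ s')) = s' := by
        rw [g.isometry.dist_eq]
        exact geod_dist_start hγ hs'I
      have h2 : dist (g x) (γ β) = d - β := by
        rw [dist_comm]
        exact geod_dist_end hγ hβI
      have hs'v : s' = d - β := by rw [← h1, hs'e, h2]
      have hwQ : γ β ∈ Q := hβmem.2
      have hwgQ : γ β ∈ g '' Q := by
        refine ⟨γ (d - β), hconv _ hαdβ (by linarith), ?_⟩
        rw [← hs'v]
        exact hs'e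
      have hwne : γ β ≠ g (γ β) := by
        intro h
        have ha1 : dist (g x) (g (γ β)) = β := by
          rw [g.isometry.dist_eq]
          exact geod_dist_start hγ hβI
        rw [← h, h2] at ha1
        linarith
      exact junction_growth htg hgeo g hperm hbdd hQ𝒞 hH1 hwQ hwgQ hwne
    · -- route via grand ladder A : the junction is g (γ α)
      push_neg at hαdβ
      have hα0 : 0 < α := lt_of_le_of_lt (by linarith [hβI.2] : (0:ℝ) ≤ d - β) hαdβ
      have hA' := grandA htg hgeo g hbdd hγ hα0 hα_lt (hnsα hα0)
      obtain ⟨u, hu, hue⟩ := hA'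
      have huI : u ∈ Icc (0:ℝ) d := ⟨le_trans hαI.1 hu.1, hu.2⟩
      have h1 : dist (g x) (g (γ α)) = α := by
        rw [g.isometry.dist_eq]
        exact geod_dist_start hγ hαI
      have h2 : dist (g x) (γ u) = d - u := by
        rw [dist_comm]
        exact geod_dist_end hγ huI
      have huv : u = d - α := by
        rw [hue] at h2
        rw [h1] at h2
        linarith
      have hwQ : g (γ α) ∈ Q := by
        rw [← hue]
        exact hconv u (by rw [huv]; linarith) (by rw [huv]; linarith)
      have hwgQ : g (γ α) ∈ g '' Q := ⟨γ α, hαmem.2, rfl⟩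
      have hwne : g (γ α) ≠ g (g (γ α)) := by
        intro h
        have h3 := g.injective h
        have ha1 : dist (g x) (g (γ α)) = α := h1
        have ha2 : dist (g x) (γ α) = d - α := by
          rw [dist_comm]
          exact geod_dist_end hγ hαI
        rw [← h3] at ha1
        rw [ha1] at ha2
        linarith
      exact junction_growth htg hgeo g hperm hbdd hQ𝒞 hH1 hwQ hwgQ hwne
  · -- β = d
    push_neg at hβd
    have hβeq : β = d := le_antisymm hβI.2 hβd
    by_cases hα0 : 0 < α
    · -- same as route A
      have hA' := grandA htg hgeo g hbdd hγ hα0 hα_lt (hnsα hα0)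
      obtain ⟨u, hu, hue⟩ := hA'
      have huI : u ∈ Icc (0:ℝ) d := ⟨le_trans hαI.1 hu.1, hu.2⟩
      have h1 : dist (g x) (g (γ α)) = α := by
        rw [g.isometry.dist_eq]
        exact geod_dist_start hγ hαI
      have h2 : dist (g x) (γ u) = d - u := by
        rw [dist_comm]
        exact geod_dist_end hγ huI
      have huv : u = d - α := by
        rw [hue] at h2
        rw [h1] at h2
        linarith
      have hwQ : g (γ α) ∈ Q := by
        rw [← hue]
        exact hconv u (by rw [huv]; linarith) (by rw [huv, hβeq]; linarith)
      have hwgQ : g (γ α) ∈ g '' Q := ⟨γ α, hαmem.2, rfl⟩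
      have hwne : g (γ α) ≠ g (g (γ α)) := by
        intro h
        have h3 := g.injective h
        have ha2 : dist (g x) (γ α) = d - α := by
          rw [dist_comm]
          exact geod_dist_end hγ hαI
        rw [← h3] at h1
        rw [h1] at ha2
        linarith
      exact junction_growth htg hgeo g hperm hbdd hQ𝒞 hH1 hwQ hwgQ hwne
    · -- α = 0 and β = d : the junction is g x itself
      push_neg at hα0
      have hαeq : α = 0 := le_antisymm hα0 hαI.1
      have hxQ : x ∈ Q := by
        have := hαmem.2
        rw [hαeq, geod_start hγ] at this
        exact this
      have hgxQ : g x ∈ Q := by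
        have := hβmem.2
        rw [hβeq, geod_end hγ] at this
        exact this
      have hwgQ : g x ∈ g '' Q := ⟨x, hxQ, rfl⟩
      have hwne : g x ≠ g (g x) := fun h => hne (g.injective h)
      exact junction_growth htg hgeo g hperm hbdd hQ𝒞 hH1 hgxQ hwgQ hwne

end TGaux


/-- Let `X` be a complete geodesic metric space tree-graded with respect to
`𝒞`, and let `g` be an isometry of `X` permuting the pieces such that the cyclic group `⟨g⟩`
has bounded orbits. If `g x ≠ x`, then `g` fixes the middle cut-point of `x, g x` (if it has
one) and fixes set-wise the middle cut-piece of `x, g x` (if it has one). -/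
theorem statement1 {X : Type*} [MetricSpace X] [CompleteSpace X]
    (hgeo : IsGeodesicSpace X) (𝒞 : Set (Set X)) (htg : IsTreeGraded X 𝒞)
    (g : X ≃ᵢ X) (hperm : ∀ P ∈ 𝒞, g '' P ∈ 𝒞)
    (hbdd : ∀ p : X, Bornology.IsBounded (Set.range fun k : ℤ => (g ^ k) p))
    (x : X) (hx : g x ≠ x) :
    (∀ m : X, IsMiddleCutPoint 𝒞 x (g x) m → g m = m) ∧
    (∀ Q : Set X, IsMiddleCutPiece 𝒞 x (g x) Q → g '' Q = Q) := by
  constructor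
  · intro m hm
    exact TGaux.midpoint_fixed htg hgeo g hbdd hx hm
  · intro Q hQ
    exact TGaux.midpiece_fixed htg hgeo g hperm hbdd hQ
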